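/- arXiv:2110.07874 — 3 statements merged into one kernel-verified Lean document; each statement's English description precedes it below -/
import Mathlib

section
/- For every positive integer u, there exists an MK(2u+1) if and only if there exists a Kirkman frame of type (1;2)^u, that is, a Kirkman frame of type 2^u which contains as a subdesign a 3-GDD of type 1^u. -/
/-- A parallel class on point set `X`: a set of blocks containing each point of `X`
exactly once. -/
def IsParallelClassOn (X : Finset ℕ) (P : Finset (Finset ℕ)) : Prop :=
  (∀ b ∈ P, b ⊆ X) ∧ ∀ x ∈ X, ∃! b, b ∈ P ∧ x ∈ b

/-- A Steiner triple system on point set `V` with block set `B`: blocks are 3-element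
subsets of `V` and every pair of distinct points lies in exactly one block. -/
def IsSTS (V : Finset ℕ) (B : Finset (Finset ℕ)) : Prop :=
  (∀ b ∈ B, b ⊆ V ∧ b.card = 3) ∧
  ∀ x ∈ V, ∀ y ∈ V, x ≠ y → ∃! b, b ∈ B ∧ x ∈ b ∧ y ∈ b

/-- A resolution of the block set `B` into parallel classes on `X`:
every block lies in exactly one class. -/
def IsResolution (X : Finset ℕ) (B : Finset (Finset ℕ))
    (R : Finset (Finset (Finset ℕ))) : Prop :=
  (∀ P ∈ R, P ⊆ B ∧ IsParallelClassOn X P) ∧ ∀ b ∈ B, ∃! P, P ∈ R ∧ b ∈ P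

/-- A Kirkman triple system: a resolvable Steiner triple system. -/
def IsKTS (V : Finset ℕ) (B : Finset (Finset ℕ)) : Prop :=
  IsSTS V B ∧ ∃ R : Finset (Finset (Finset ℕ)), IsResolution V B R

/-- There exists a KTS of order `v` containing an STS of order `u` as a subdesign. -/
def ExistsKTSSubSTS (v u : ℕ) : Prop :=
  ∃ (V U : Finset ℕ) (B A : Finset (Finset ℕ)),
    IsKTS V B ∧ IsSTS U A ∧ U ⊆ V ∧ A ⊆ B ∧ V.card = v ∧ U.card = u

/-- A uniform 3-GDD of type g^u with groups `G i` and block set `B`: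
groups are disjoint of size `g`, blocks are triples meeting each group at most once,
and every pair of points from distinct groups lies in exactly one block. -/
def IsGDD (g u : ℕ) (G : Fin u → Finset ℕ) (B : Finset (Finset ℕ)) : Prop :=
  (∀ i, (G i).card = g) ∧
  (∀ i j, i ≠ j → Disjoint (G i) (G j)) ∧
  (∀ b ∈ B, b ⊆ Finset.univ.biUnion G ∧ b.card = 3 ∧ ∀ i, (b ∩ G i).card ≤ 1) ∧
  ∀ x y : ℕ, (∃ i j, i ≠ j ∧ x ∈ G i ∧ y ∈ G j) → ∃! b, b ∈ B ∧ x ∈ b ∧ y ∈ b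

/-- A Kirkman frame of type h^u: a 3-GDD of type h^u whose blocks resolve into
partial parallel classes, each a parallel class on the complement of some group. -/
def IsKirkmanFrame (h u : ℕ) (G : Fin u → Finset ℕ) (B : Finset (Finset ℕ)) : Prop :=
  IsGDD h u G B ∧
  ∃ R : Finset (Finset (Finset ℕ)),
    (∀ P ∈ R, P ⊆ B ∧ ∃ i, IsParallelClassOn (Finset.univ.biUnion G \ G i) P) ∧
    ∀ b ∈ B, ∃! P, P ∈ R ∧ b ∈ P

/-- There exists a Kirkman frame of type (g;h)^u: a Kirkman frame of type h^u with
groups `G i` containing as a subdesign a 3-GDD of type g^u with groups `W i ⊆ G i`. -/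
def ExistsFrameSubGDD (g h u : ℕ) : Prop :=
  ∃ (G W : Fin u → Finset ℕ) (B A : Finset (Finset ℕ)),
    IsKirkmanFrame h u G B ∧ IsGDD g u W A ∧ (∀ i, W i ⊆ G i) ∧ A ⊆ B

/-- There exists a resolvable transversal design RTD(3,m): a resolvable 3-GDD of
type m^3. -/
def ExistsRTD3 (m : ℕ) : Prop :=
  ∃ (G : Fin 3 → Finset ℕ) (B : Finset (Finset ℕ)),
    IsGDD m 3 G B ∧
    ∃ R : Finset (Finset (Finset ℕ)), IsResolution (Finset.univ.biUnion G) B R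

/-- A pairwise balanced design PBD(v,K) on point set `X` with block set `B`. -/
def IsPBD (v : ℕ) (K : Set ℕ) (X : Finset ℕ) (B : Finset (Finset ℕ)) : Prop :=
  X.card = v ∧ (∀ b ∈ B, b ⊆ X ∧ b.card ∈ K) ∧
  ∀ x ∈ X, ∀ y ∈ X, x ≠ y → ∃! b, b ∈ B ∧ x ∈ b ∧ y ∈ b

/-- The block set `B` has chromatic index at most `k`: it can be partitioned into at
most `k` partial parallel classes (sets of pairwise disjoint blocks). -/
def ChromIndexLE (B : Finset (Finset ℕ)) (k : ℕ) : Prop :=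
  ∃ R : Finset (Finset (Finset ℕ)), R.card ≤ k ∧
    (∀ P ∈ R, P ⊆ B ∧ ∀ b ∈ P, ∀ c ∈ P, b ≠ c → Disjoint b c) ∧
    ∀ b ∈ B, ∃ P ∈ R, b ∈ P

open Finset in
lemma rev_dir {u : ℕ} (hu : 0 < u) (h : ExistsKTSSubSTS (2*u+1) u) :
    ExistsFrameSubGDD 1 2 u := by
  classical
  obtain ⟨V, U, B, A, ⟨⟨hB3, hBpair⟩, R, hRcls, hRcov⟩, ⟨hA3, hApair⟩, hUV, hAB, hVc, hUc⟩ := h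
  -- blocks with two points of U lie inside U
  have hblkU : ∀ b ∈ B, ∀ x ∈ b, ∀ y ∈ b, x ∈ U → y ∈ U → x ≠ y → b ⊆ U := by
    intro b hb x hxb y hyb hxU hyU hxy
    obtain ⟨a, ⟨haA, hxa, hya⟩, _⟩ := hApair x hxU y hyU hxy
    have hbe : b = a :=
      (hBpair x (hUV hxU) y (hUV hyU) hxy).unique ⟨hb, hxb, hyb⟩ ⟨hAB haA, hxa, hya⟩
    rw [hbe]; exact (hA3 a haA).1
  -- a point outside U
  have hVUne : (V \ U).Nonempty := by
    apply card_pos.mp; rw [card_sdiff_of_subset hUV, hVc, hUc]; omega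
  obtain ⟨inf, hinf⟩ := hVUne
  have hinfV : inf ∈ V := (mem_sdiff.mp hinf).1
  have hinfU : inf ∉ U := (mem_sdiff.mp hinf).2
  -- enumerate U
  have hwex : ∃ w : Fin u → ℕ, Function.Injective w ∧ (∀ i, w i ∈ U) ∧ ∀ x ∈ U, ∃ i, w i = x := by
    refine ⟨fun i => (U.orderIsoOfFin hUc i : ℕ), ?_, fun i => (U.orderIsoOfFin hUc i).2, ?_⟩
    · intro i j hij
      exact (U.orderIsoOfFin hUc).injective (Subtype.ext hij)
    · intro x hx
      exact ⟨(U.orderIsoOfFin hUc).symm ⟨x, hx⟩, by simp⟩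
  obtain ⟨w, hwinj, hwU, hwsurj⟩ := hwex
  -- blocks through inf
  have hwne : ∀ i : Fin u, inf ≠ w i := by
    intro i hh; exact hinfU (hh ▸ hwU i)
  have hbex : ∀ i : Fin u, ∃! b, b ∈ B ∧ inf ∈ b ∧ w i ∈ b := fun i =>
    hBpair inf hinfV (w i) (hUV (hwU i)) (hwne i)
  have hbex' : ∀ i : Fin u, ∃ b, (b ∈ B ∧ inf ∈ b ∧ w i ∈ b) ∧
      ∀ c, (c ∈ B ∧ inf ∈ c ∧ w i ∈ c) → c = b := hbex
  choose bb hbbp hbbu using hbex'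
  have hbbB : ∀ i, bb i ∈ B := fun i => (hbbp i).1
  have hbbinf : ∀ i, inf ∈ bb i := fun i => (hbbp i).2.1
  have hbbw : ∀ i, w i ∈ bb i := fun i => (hbbp i).2.2
  -- the third point of each bb i
  have hy3 : ∀ i, ∃ z, ((bb i).erase inf).erase (w i) = {z} := by
    intro i
    apply card_eq_one.mp
    have h3 := (hB3 _ (hbbB i)).2
    have hwi : w i ∈ (bb i).erase inf := mem_erase.mpr ⟨(hwne i).symm, hbbw i⟩
    rw [card_erase_of_mem hwi, card_erase_of_mem (hbbinf i), h3]
  choose yy hyy using hy3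
  have hyyprops : ∀ i, yy i ∈ bb i ∧ yy i ≠ w i ∧ yy i ≠ inf := by
    intro i
    have hm : yy i ∈ ((bb i).erase inf).erase (w i) := by
      rw [hyy i]; exact mem_singleton_self _
    obtain ⟨hne_w, hm2⟩ := mem_erase.mp hm
    obtain ⟨hne_inf, hm3⟩ := mem_erase.mp hm2
    exact ⟨hm3, hne_w, hne_inf⟩
  have hmem3 : ∀ i, ∀ z ∈ bb i, z = inf ∨ z = w i ∨ z = yy i := by
    intro i z hz
    by_cases h1 : z = inf
    · exact Or.inl h1
    by_cases h2 : z = w i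
    · exact Or.inr (Or.inl h2)
    have : z ∈ ((bb i).erase inf).erase (w i) := mem_erase.mpr ⟨h2, mem_erase.mpr ⟨h1, hz⟩⟩
    rw [hyy i] at this
    exact Or.inr (Or.inr (mem_singleton.mp this))
  have hyyU : ∀ i, yy i ∉ U := by
    intro i hyU
    have hsub := hblkU _ (hbbB i) _ (hbbw i) _ (hyyprops i).1 (hwU i) hyU (Ne.symm (hyyprops i).2.1)
    exact hinfU (hsub (hbbinf i))
  have hyyV : ∀ i, yy i ∈ V := fun i => (hB3 _ (hbbB i)).1 (hyyprops i).1
  have hbbyy : ∀ i, ∀ c ∈ B, inf ∈ c → yy i ∈ c → c = bb i := by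
    intro i c hc hic hyc
    exact (hBpair inf hinfV (yy i) (hyyV i) (fun hh => (hyyprops i).2.2 hh.symm)).unique
      ⟨hc, hic, hyc⟩ ⟨hbbB i, hbbinf i, (hyyprops i).1⟩
  have hyyinj : Function.Injective yy := by
    intro i j hij
    have hbe : bb i = bb j := by
      have := hij ▸ (hyyprops i).1
      exact (hbbyy j (bb i) (hbbB i) (hbbinf i) this).symm ▸ rfl
    have hwj : w j ∈ bb i := by rw [hbe]; exact hbbw j
    rcases hmem3 i _ hwj with h | h | h
    · exact absurd (h ▸ hwU j) hinfU
    · exact (hwinj h).symm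
    · exact absurd (h ▸ hwU j) (fun hh => hyyU i hh)
  -- groups
  have hGX : Finset.univ.biUnion (fun i : Fin u => ({w i, yy i} : Finset ℕ)) = V.erase inf := by
    apply Finset.Subset.antisymm
    · intro z hz
      obtain ⟨i, _, hzi⟩ := mem_biUnion.mp hz
      rcases mem_insert.mp hzi with h | h
      · exact mem_erase.mpr ⟨by rw [h]; exact (hwne i).symm, by rw [h]; exact hUV (hwU i)⟩
      · rw [mem_singleton.mp h]
        exact mem_erase.mpr ⟨(hyyprops i).2.2, hyyV i⟩
    · intro z hz
      obtain ⟨hzinf, hzV⟩ := mem_erase.mp hz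
      by_cases hzU : z ∈ U
      · obtain ⟨i, rfl⟩ := hwsurj z hzU
        exact mem_biUnion.mpr ⟨i, mem_univ i, mem_insert_self _ _⟩
      · have himg : Finset.univ.image yy = (V \ U).erase inf := by
          apply Finset.eq_of_subset_of_card_le
          · intro t ht
            obtain ⟨i, _, rfl⟩ := mem_image.mp ht
            exact mem_erase.mpr ⟨(hyyprops i).2.2, mem_sdiff.mpr ⟨hyyV i, hyyU i⟩⟩
          · rw [card_erase_of_mem hinf, card_sdiff_of_subset hUV, hVc, hUc,
              card_image_of_injective _ hyyinj, card_univ, Fintype.card_fin]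
            omega
        have : z ∈ Finset.univ.image yy := by
          rw [himg]
          exact mem_erase.mpr ⟨hzinf, mem_sdiff.mpr ⟨hzV, hzU⟩⟩
        obtain ⟨i, _, rfl⟩ := mem_image.mp this
        exact mem_biUnion.mpr ⟨i, mem_univ i, mem_insert_of_mem (mem_singleton_self _)⟩
  have hGdisj : ∀ i j : Fin u, i ≠ j →
      Disjoint ({w i, yy i} : Finset ℕ) ({w j, yy j} : Finset ℕ) := by
    intro i j hij
    rw [Finset.disjoint_left]
    intro a hai haj
    simp only [mem_insert, mem_singleton] at hai haj
    rcases hai with h1 | h1 <;> rcases haj with h2 | h2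
    · exact hij (hwinj (h1.symm.trans h2))
    · exact hyyU j ((h1.symm.trans h2) ▸ hwU i)
    · exact hyyU i ((h2.symm.trans h1) ▸ hwU j)
    · exact hij (hyyinj (h1.symm.trans h2))
  -- the GDD of type 2^u
  have hGDD2 : IsGDD 2 u (fun i => ({w i, yy i} : Finset ℕ)) (B.filter (fun b => inf ∉ b)) := by
    refine ⟨?_, hGdisj, ?_, ?_⟩
    · intro i
      exact card_pair (Ne.symm (hyyprops i).2.1)
    · intro b hb
      obtain ⟨hbB, hbinf⟩ := mem_filter.mp hb
      refine ⟨?_, (hB3 b hbB).2, ?_⟩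
      · intro z hz
        rw [hGX]
        exact mem_erase.mpr ⟨fun hh => hbinf (hh ▸ hz), (hB3 b hbB).1 hz⟩
      · intro i
        by_contra hc
        push_neg at hc
        have hein : (b ∩ {w i, yy i} : Finset ℕ) = {w i, yy i} :=
          Finset.eq_of_subset_of_card_le inter_subset_right
            (by rw [card_pair (Ne.symm (hyyprops i).2.1)]; omega)
        have hwib : w i ∈ b := by
          have : w i ∈ b ∩ ({w i, yy i} : Finset ℕ) := by
            rw [hein]; exact mem_insert_self _ _
          exact (mem_inter.mp this).1
        have hyib : yy i ∈ b := by
          have : yy i ∈ b ∩ ({w i, yy i} : Finset ℕ) := by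
            rw [hein]; exact mem_insert_of_mem (mem_singleton_self _)
          exact (mem_inter.mp this).1
        have hbbi : b = bb i :=
          (hBpair (w i) (hUV (hwU i)) (yy i) (hyyV i) (Ne.symm (hyyprops i).2.1)).unique
            ⟨hbB, hwib, hyib⟩ ⟨hbbB i, hbbw i, (hyyprops i).1⟩
        rw [hbbi] at hbinf
        exact hbinf (hbbinf i)
    · rintro x y ⟨i, j, hij, hxi, hyj⟩
      have hxX : x ∈ V.erase inf := by
        rw [← hGX]; exact mem_biUnion.mpr ⟨i, mem_univ i, hxi⟩
      have hyX : y ∈ V.erase inf := by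
        rw [← hGX]; exact mem_biUnion.mpr ⟨j, mem_univ j, hyj⟩
      obtain ⟨hxinf, hxV⟩ := mem_erase.mp hxX
      obtain ⟨hyinf, hyV⟩ := mem_erase.mp hyX
      have hxy : x ≠ y := fun hh => (disjoint_left.mp (hGdisj i j hij)) hxi (hh ▸ hyj)
      obtain ⟨b, ⟨hbB, hxb, hyb⟩, hbu⟩ := hBpair x hxV y hyV hxy
      have hbinf : inf ∉ b := by
        intro hinfb
        have hbbi : b = bb i := by
          rcases mem_insert.mp hxi with hh | hh
          · exact hbbu i b ⟨hbB, hinfb, hh ▸ hxb⟩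
          · exact hbbyy i b hbB hinfb ((mem_singleton.mp hh) ▸ hxb)
        rw [hbbi] at hyb
        rcases hmem3 i y hyb with hh | hh | hh
        · exact hyinf hh
        · exact disjoint_left.mp (hGdisj j i hij.symm) hyj
            (by rw [hh]; exact mem_insert_self _ _)
        · exact disjoint_left.mp (hGdisj j i hij.symm) hyj
            (by rw [hh]; exact mem_insert_of_mem (mem_singleton_self _))
      refine ⟨b, ⟨mem_filter.mpr ⟨hbB, hbinf⟩, hxb, hyb⟩, ?_⟩
      rintro c ⟨hc, hxc, hyc⟩
      exact hbu c ⟨(mem_filter.mp hc).1, hxc, hyc⟩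
  -- every block of B containing inf is some bb i
  have hcbb : ∀ c ∈ B, inf ∈ c → ∃ i, c = bb i := by
    intro c hc hinfc
    have h2 : (c.erase inf).Nonempty := by
      apply card_pos.mp
      rw [card_erase_of_mem hinfc, (hB3 c hc).2]
      omega
    obtain ⟨z, hz⟩ := h2
    have hzc : z ∈ c := mem_of_mem_erase hz
    have hzinf : z ≠ inf := ne_of_mem_erase hz
    have hzX : z ∈ Finset.univ.biUnion (fun i : Fin u => ({w i, yy i} : Finset ℕ)) := by
      rw [hGX]; exact mem_erase.mpr ⟨hzinf, (hB3 c hc).1 hzc⟩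
    obtain ⟨i, _, hzi⟩ := mem_biUnion.mp hzX
    refine ⟨i, ?_⟩
    rcases mem_insert.mp hzi with hh | hh
    · exact hbbu i c ⟨hc, hinfc, hh ▸ hzc⟩
    · exact hbbyy i c hc hinfc ((mem_singleton.mp hh) ▸ hzc)
  -- holey parallel classes
  have hclass : ∀ P ∈ R, ∃ i, IsParallelClassOn
      (Finset.univ.biUnion (fun i : Fin u => ({w i, yy i} : Finset ℕ)) \ {w i, yy i})
      (P.filter (fun b => inf ∉ b)) := by
    intro P hP
    obtain ⟨hPB, hPV, hPpar⟩ := hRcls P hP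
    obtain ⟨c, ⟨hcP, hcinf⟩, hcu⟩ := hPpar inf hinfV
    obtain ⟨i, rfl⟩ := hcbb c (hPB hcP) hcinf
    refine ⟨i, ?_, ?_⟩
    · intro d hd
      obtain ⟨hdP, hdinf⟩ := mem_filter.mp hd
      intro z hz
      have hzV : z ∈ V := hPV d hdP hz
      have hzinf : z ≠ inf := fun hh => hdinf (hh ▸ hz)
      rw [mem_sdiff]
      refine ⟨by rw [hGX]; exact mem_erase.mpr ⟨hzinf, hzV⟩, ?_⟩
      intro hzGi
      have hzbb : z ∈ bb i := by
        rcases mem_insert.mp hzGi with hh | hh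
        · rw [hh]; exact hbbw i
        · rw [mem_singleton.mp hh]; exact (hyyprops i).1
      have hde : d = bb i := (hPpar z hzV).unique ⟨hdP, hz⟩ ⟨hcP, hzbb⟩
      rw [hde] at hdinf
      exact hdinf (hbbinf i)
    · intro x hx
      rw [mem_sdiff, hGX, mem_erase] at hx
      obtain ⟨⟨hxinf, hxV⟩, hxGi⟩ := hx
      obtain ⟨d, ⟨hdP, hxd⟩, hdu⟩ := hPpar x hxV
      have hdinf : inf ∉ d := by
        intro hinfd
        have hde : d = bb i := hcu d ⟨hdP, hinfd⟩
        rw [hde] at hxd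
        rcases hmem3 i x hxd with hh | hh | hh
        · exact hxinf hh
        · exact hxGi (by rw [hh]; exact mem_insert_self _ _)
        · exact hxGi (by rw [hh]; exact mem_insert_of_mem (mem_singleton_self _))
      refine ⟨d, ⟨mem_filter.mpr ⟨hdP, hdinf⟩, hxd⟩, ?_⟩
      rintro e ⟨heP, hxe⟩
      exact hdu e ⟨(mem_filter.mp heP).1, hxe⟩
  -- assemble
  refine ⟨fun i => ({w i, yy i} : Finset ℕ), fun i => ({w i} : Finset ℕ),
    B.filter (fun b => inf ∉ b), A, ⟨hGDD2, ?_⟩, ?_, ?_, ?_⟩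
  · refine ⟨R.image (fun P => P.filter (fun b => inf ∉ b)), ?_, ?_⟩
    · intro Q hQ
      obtain ⟨P, hP, rfl⟩ := mem_image.mp hQ
      refine ⟨?_, hclass P hP⟩
      intro d hd
      obtain ⟨hdP, hdinf⟩ := mem_filter.mp hd
      exact mem_filter.mpr ⟨(hRcls P hP).1 hdP, hdinf⟩
    · intro b hb
      obtain ⟨hbB, hbinf⟩ := mem_filter.mp hb
      obtain ⟨P, ⟨hPR, hbP⟩, hPu⟩ := hRcov b hbB
      refine ⟨P.filter (fun b => inf ∉ b),
        ⟨mem_image_of_mem _ hPR, mem_filter.mpr ⟨hbP, hbinf⟩⟩, ?_⟩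
      rintro Q ⟨hQ, hbQ⟩
      obtain ⟨P', hP', rfl⟩ := mem_image.mp hQ
      rw [hPu P' ⟨hP', (mem_filter.mp hbQ).1⟩]
  · refine ⟨fun i => card_singleton _, ?_, ?_, ?_⟩
    · intro i j hij
      rw [Finset.disjoint_singleton]
      exact fun hh => hij (hwinj hh)
    · intro b hbA
      have hbU := (hA3 b hbA).1
      refine ⟨?_, (hA3 b hbA).2, fun i => ?_⟩
      · intro z hz
        obtain ⟨i, rfl⟩ := hwsurj z (hbU hz)
        exact mem_biUnion.mpr ⟨i, mem_univ i, mem_singleton_self _⟩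
      · calc (b ∩ {w i}).card ≤ ({w i} : Finset ℕ).card := card_le_card inter_subset_right
          _ = 1 := card_singleton _
    · rintro x y ⟨i, j, hij, hxi, hyj⟩
      rw [mem_singleton] at hxi hyj
      subst hxi; subst hyj
      exact hApair (w i) (hwU i) (w j) (hwU j) (fun hh => hij (hwinj hh))
  · intro i z hz
    rw [mem_singleton.mp hz]
    exact mem_insert_self _ _
  · intro b hbA
    exact mem_filter.mpr ⟨hAB hbA, fun hinfb => hinfU ((hA3 b hbA).1 hinfb)⟩

open Finset in
lemma fwd_dir {u : ℕ} (hu : 2 ≤ u) (h : ExistsFrameSubGDD 1 2 u) :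
    ExistsKTSSubSTS (2*u+1) u := by
  classical
  obtain ⟨G, W, B, A, ⟨⟨hGc, hGd, hB3, hBpair⟩, R, hRcls, hRcov⟩,
    ⟨hWc, hWd, hA3, hApair⟩, hWG, hAB⟩ := h
  set X : Finset ℕ := Finset.univ.biUnion G with hXdef
  set inf : ℕ := X.sup id + 1 with hinfdef
  have hinfX : inf ∉ X := by
    intro hmem
    have := Finset.le_sup (f := id) hmem
    simp only [id] at this
    omega
  have hGX : ∀ i, G i ⊆ X := fun i => subset_biUnion_of_mem G (mem_univ i)
  have hgroup : ∀ x ∈ X, ∃ i, x ∈ G i := by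
    intro x hx
    obtain ⟨i, _, hi⟩ := mem_biUnion.mp hx
    exact ⟨i, hi⟩
  have hgroupu : ∀ (i j : Fin u) (x : ℕ), x ∈ G i → x ∈ G j → i = j := by
    intro i j x hxi hxj
    by_contra hij
    exact disjoint_left.mp (hGd i j hij) hxi hxj
  have hXc : X.card = 2 * u := by
    rw [hXdef, card_biUnion (fun i _ j _ hij => hGd i j hij)]
    rw [Finset.sum_congr rfl (fun i _ => hGc i), Finset.sum_const, card_univ,
      Fintype.card_fin, smul_eq_mul, mul_comm]
  have hinfG : ∀ i, inf ∉ G i := fun i hh => hinfX (hGX i hh)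
  have hGne : ∀ i, (G i).Nonempty := fun i => card_pos.mp (by rw [hGc]; omega)
  have hnbinj : ∀ i j : Fin u, insert inf (G i) = insert inf (G j) → i = j := by
    intro i j hij
    have hGij : G i = G j := by
      have h1 := congrArg (fun s => Finset.erase s inf) hij
      simpa [Finset.erase_insert (hinfG i), Finset.erase_insert (hinfG j)] using h1
    obtain ⟨x, hx⟩ := hGne i
    exact hgroupu i j x hx (hGij ▸ hx)
  have hnbB : ∀ i, insert inf (G i) ∉ B := by
    intro i hmem
    exact hinfX ((hB3 _ hmem).1 (mem_insert_self _ _))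
  -- the new point set and blocks
  set nb : Fin u → Finset ℕ := fun i => insert inf (G i) with hnbdef
  set B' : Finset (Finset ℕ) := B ∪ Finset.univ.image nb with hB'def
  set V : Finset ℕ := insert inf X with hVdef
  have hnbV : ∀ i, nb i ⊆ V := fun i => insert_subset_insert _ (hGX i)
  have hnb3 : ∀ i, (nb i).card = 3 := by
    intro i
    show (insert inf (G i)).card = 3
    rw [card_insert_of_notMem (hinfG i), hGc]
  have hXV : X ⊆ V := subset_insert _ _
  have hinfV : inf ∈ V := mem_insert_self _ _
  -- pair coverage with inf
  have hcovinf : ∀ y ∈ X, ∃! b, b ∈ B' ∧ inf ∈ b ∧ y ∈ b := by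
    intro y hy
    obtain ⟨i, hyi⟩ := hgroup y hy
    refine ⟨nb i, ⟨mem_union_right _ (mem_image_of_mem nb (mem_univ i)),
      mem_insert_self _ _, mem_insert_of_mem hyi⟩, ?_⟩
    rintro c ⟨hc, hinfc, hyc⟩
    rcases mem_union.mp hc with hcB | hcI
    · exact absurd ((hB3 c hcB).1 hinfc) hinfX
    · obtain ⟨j, _, rfl⟩ := mem_image.mp hcI
      rcases mem_insert.mp hyc with hh | hh
      · exact absurd (hh ▸ hy) hinfX
      · rw [hgroupu j i y hh hyi]
  -- pair coverage within X
  have hcovX : ∀ x ∈ X, ∀ y ∈ X, x ≠ y → ∃! b, b ∈ B' ∧ x ∈ b ∧ y ∈ b := by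
    intro x hx y hy hxy
    obtain ⟨i, hxi⟩ := hgroup x hx
    obtain ⟨j, hyj⟩ := hgroup y hy
    by_cases hij : i = j
    · subst hij
      refine ⟨nb i, ⟨mem_union_right _ (mem_image_of_mem nb (mem_univ i)),
        mem_insert_of_mem hxi, mem_insert_of_mem hyj⟩, ?_⟩
      rintro c ⟨hc, hxc, hyc⟩
      rcases mem_union.mp hc with hcB | hcI
      · exfalso
        have hsub : ({x, y} : Finset ℕ) ⊆ c ∩ G i := by
          intro t ht
          rcases mem_insert.mp ht with hh | hh
          · rw [hh]; exact mem_inter.mpr ⟨hxc, hxi⟩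
          · rw [mem_singleton.mp hh]; exact mem_inter.mpr ⟨hyc, hyj⟩
        have h2 : 2 ≤ (c ∩ G i).card := by
          calc 2 = ({x, y} : Finset ℕ).card := (card_pair hxy).symm
            _ ≤ _ := card_le_card hsub
        have := (hB3 c hcB).2.2 i
        omega
      · obtain ⟨k, _, rfl⟩ := mem_image.mp hcI
        rcases mem_insert.mp hxc with hh | hh
        · exact absurd (hh ▸ hx) hinfX
        · rw [hgroupu k i x hh hxi]
    · obtain ⟨b, ⟨hbB, hxb, hyb⟩, hbu⟩ := hBpair x y ⟨i, j, hij, hxi, hyj⟩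
      refine ⟨b, ⟨mem_union_left _ hbB, hxb, hyb⟩, ?_⟩
      rintro c ⟨hc, hxc, hyc⟩
      rcases mem_union.mp hc with hcB | hcI
      · exact hbu c ⟨hcB, hxc, hyc⟩
      · exfalso
        obtain ⟨k, _, rfl⟩ := mem_image.mp hcI
        rcases mem_insert.mp hxc with hh | hh
        · exact hinfX (hh ▸ hx)
        rcases mem_insert.mp hyc with hh2 | hh2
        · exact hinfX (hh2 ▸ hy)
        exact hij ((hgroupu i k x hxi hh).trans (hgroupu k j y hh2 hyj))
  -- the STS on V
  have hSTS : IsSTS V B' := by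
    constructor
    · intro b hb
      rcases mem_union.mp hb with hbB | hbI
      · exact ⟨(hB3 b hbB).1.trans hXV, (hB3 b hbB).2.1⟩
      · obtain ⟨i, _, rfl⟩ := mem_image.mp hbI
        exact ⟨hnbV i, hnb3 i⟩
    · intro x hx y hy hxy
      rcases mem_insert.mp hx with hh | hh
      · subst hh
        rcases mem_insert.mp hy with hh2 | hh2
        · exact absurd hh2.symm hxy
        · exact hcovinf y hh2
      rcases mem_insert.mp hy with hh2 | hh2
      · subst hh2
        obtain ⟨b, ⟨hb1, hb2, hb3⟩, hbu⟩ := hcovinf x hh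
        exact ⟨b, ⟨hb1, hb3, hb2⟩, fun c ⟨hc1, hc2, hc3⟩ => hbu c ⟨hc1, hc3, hc2⟩⟩
      · exact hcovX x hh y hh2 hxy
  -- hole uniqueness
  have hholeu : ∀ (P : Finset (Finset ℕ)) (i j : Fin u),
      IsParallelClassOn (X \ G i) P → IsParallelClassOn (X \ G j) P → i = j := by
    intro P i j h1 h2
    by_contra hij
    obtain ⟨x, hx⟩ := hGne j
    have hxXi : x ∈ X \ G i :=
      mem_sdiff.mpr ⟨hGX j hx, fun hh => hij (hgroupu i j x hh hx)⟩
    obtain ⟨b, ⟨hbP, hxb⟩, _⟩ := h1.2 x hxXi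
    exact (mem_sdiff.mp (h2.1 b hbP hxb)).2 hx
  -- degree count: every point lies in u-1 blocks of B
  have hdeg : ∀ (i : Fin u), ∀ x ∈ G i, (B.filter (fun b => x ∈ b)).card = u - 1 := by
    intro i x hxi
    have hbij : X \ G i = (B.filter (fun b => x ∈ b)).biUnion (fun b => b.erase x) := by
      apply Finset.Subset.antisymm
      · intro y hy
        obtain ⟨hyX, hyGi⟩ := mem_sdiff.mp hy
        obtain ⟨j, hyj⟩ := hgroup y hyX
        have hij : i ≠ j := fun hh => hyGi (hh ▸ hyj)
        obtain ⟨b, ⟨hbB, hxb, hyb⟩, _⟩ := hBpair x y ⟨i, j, hij, hxi, hyj⟩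
        exact mem_biUnion.mpr ⟨b, mem_filter.mpr ⟨hbB, hxb⟩,
          mem_erase.mpr ⟨fun hh => hyGi (hh.symm ▸ hxi), hyb⟩⟩
      · intro y hy
        obtain ⟨b, hb, hyb⟩ := mem_biUnion.mp hy
        obtain ⟨hbB, hxb⟩ := mem_filter.mp hb
        obtain ⟨hyx, hybb⟩ := mem_erase.mp hyb
        refine mem_sdiff.mpr ⟨(hB3 b hbB).1 hybb, ?_⟩
        intro hyGi
        have hsub : ({x, y} : Finset ℕ) ⊆ b ∩ G i := by
          intro t ht
          rcases mem_insert.mp ht with hh | hh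
          · rw [hh]; exact mem_inter.mpr ⟨hxb, hxi⟩
          · rw [mem_singleton.mp hh]; exact mem_inter.mpr ⟨hybb, hyGi⟩
        have h2 : 2 ≤ (b ∩ G i).card := by
          calc 2 = ({x, y} : Finset ℕ).card := (card_pair (fun hh => hyx hh.symm)).symm
            _ ≤ _ := card_le_card hsub
        have := (hB3 b hbB).2.2 i
        omega
    have hdisj : ∀ b ∈ B.filter (fun b => x ∈ b), ∀ c ∈ B.filter (fun b => x ∈ b),
        b ≠ c → Disjoint (b.erase x) (c.erase x) := by
      intro b hb c hc hbc
      rw [disjoint_left]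
      intro z hzb hzc
      obtain ⟨hbB, hxb⟩ := mem_filter.mp hb
      obtain ⟨hcB, hxc⟩ := mem_filter.mp hc
      obtain ⟨hzx, hzbb⟩ := mem_erase.mp hzb
      obtain ⟨_, hzcc⟩ := mem_erase.mp hzc
      have hzX : z ∈ X := (hB3 b hbB).1 hzbb
      obtain ⟨j, hzj⟩ := hgroup z hzX
      have hij : i ≠ j := by
        intro hh
        subst hh
        have hsub : ({x, z} : Finset ℕ) ⊆ b ∩ G i := by
          intro t ht
          rcases mem_insert.mp ht with hh | hh
          · rw [hh]; exact mem_inter.mpr ⟨hxb, hxi⟩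
          · rw [mem_singleton.mp hh]; exact mem_inter.mpr ⟨hzbb, hzj⟩
        have h2 : 2 ≤ (b ∩ G i).card := by
          calc 2 = ({x, z} : Finset ℕ).card := (card_pair (fun hh => hzx hh.symm)).symm
            _ ≤ _ := card_le_card hsub
        have := (hB3 b hbB).2.2 i
        omega
      exact hbc ((hBpair x z ⟨i, j, hij, hxi, hzj⟩).unique ⟨hbB, hxb, hzbb⟩ ⟨hcB, hxc, hzcc⟩)
    have h1 : (X \ G i).card = 2 * (B.filter (fun b => x ∈ b)).card := by
      rw [hbij, card_biUnion hdisj]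
      have heach : ∀ b ∈ B.filter (fun b => x ∈ b), (b.erase x).card = 2 := by
        intro b hb
        obtain ⟨hbB, hxb⟩ := mem_filter.mp hb
        rw [card_erase_of_mem hxb, (hB3 b hbB).2.1]
      rw [Finset.sum_congr rfl heach, Finset.sum_const, smul_eq_mul, mul_comm]
    have h2 : (X \ G i).card = 2 * u - 2 := by
      rw [card_sdiff_of_subset (hGX i), hXc, hGc]
    omega
  -- the number of classes missing group i is u - 1
  have hNi : ∀ i : Fin u,
      (R.filter (fun P => ¬ IsParallelClassOn (X \ G i) P)).card = u - 1 := by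
    intro i
    obtain ⟨x, hxi⟩ := hGne i
    rw [← hdeg i x hxi]
    have hub : ∀ P, P ∈ R.filter (fun P => ¬ IsParallelClassOn (X \ G i) P) →
        ∃ b, (b ∈ P ∧ x ∈ b) ∧ ∀ c, (c ∈ P ∧ x ∈ c) → c = b := by
      intro P hP
      obtain ⟨hPR, hPni⟩ := mem_filter.mp hP
      obtain ⟨hPB, j, hPj⟩ := hRcls P hPR
      have hij : j ≠ i := fun hh => hPni (hh ▸ hPj)
      exact hPj.2 x (mem_sdiff.mpr ⟨hGX i hxi, fun hh => hij (hgroupu j i x hh hxi)⟩)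
    choose! φ hφ hφu using hub
    apply Finset.card_bij (fun P _ => φ P)
    · intro P hP
      exact mem_filter.mpr ⟨(hRcls P (mem_filter.mp hP).1).1 (hφ P hP).1, (hφ P hP).2⟩
    · intro P1 hP1 P2 hP2 heq
      have hb1 := hφ P1 hP1
      have hb2 := hφ P2 hP2
      have hbB : φ P1 ∈ B := (hRcls _ (mem_filter.mp hP1).1).1 hb1.1
      exact (hRcov _ hbB).unique ⟨(mem_filter.mp hP1).1, hb1.1⟩
        ⟨(mem_filter.mp hP2).1, heq ▸ hb2.1⟩
    · intro b hb
      obtain ⟨hbB, hxb⟩ := mem_filter.mp hb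
      obtain ⟨P, ⟨hPR, hbP⟩, _⟩ := hRcov b hbB
      have hPf : P ∈ R.filter (fun P => ¬ IsParallelClassOn (X \ G i) P) := by
        refine mem_filter.mpr ⟨hPR, ?_⟩
        intro hpar
        exact (mem_sdiff.mp (hpar.1 b hbP hxb)).2 hxi
      exact ⟨P, hPf, (hφu P hPf b ⟨hbP, hxb⟩).symm⟩
  -- exactly one class missing each group
  have hsplit : ∀ i : Fin u,
      (R.filter (fun P => IsParallelClassOn (X \ G i) P)).card + (u - 1) = R.card := by
    intro i
    rw [← hNi i]
    exact Finset.card_filter_add_card_filter_not _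
  have hRunion : R = Finset.univ.biUnion
      (fun i => R.filter (fun P => IsParallelClassOn (X \ G i) P)) := by
    apply Finset.Subset.antisymm
    · intro P hP
      obtain ⟨_, i, hi⟩ := hRcls P hP
      exact mem_biUnion.mpr ⟨i, mem_univ i, mem_filter.mpr ⟨hP, hi⟩⟩
    · intro P hP
      obtain ⟨i, _, hPi⟩ := mem_biUnion.mp hP
      exact (mem_filter.mp hPi).1
  have hsum : ∑ i : Fin u, (R.filter (fun P => IsParallelClassOn (X \ G i) P)).card
      = R.card := by
    conv_rhs => rw [hRunion]
    rw [card_biUnion]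
    intro i _ j _ hij
    rw [Function.onFun, disjoint_left]
    intro P hPi hPj
    exact hij (hholeu P i j (mem_filter.mp hPi).2 (mem_filter.mp hPj).2)
  have hc1 : ∀ i : Fin u, (R.filter (fun P => IsParallelClassOn (X \ G i) P)).card = 1 := by
    have i0 : Fin u := ⟨0, by omega⟩
    set c0 := (R.filter (fun P => IsParallelClassOn (X \ G i0) P)).card with hc0
    have hci : ∀ i : Fin u, (R.filter (fun P => IsParallelClassOn (X \ G i) P)).card = c0 := by
      intro i
      have h1 := hsplit i
      have h2 := hsplit i0
      omega
    have hsum2 : u * c0 = R.card := by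
      rw [← hsum, Finset.sum_congr rfl (fun i _ => hci i), Finset.sum_const, card_univ,
        Fintype.card_fin, smul_eq_mul]
    have hc01 : c0 = 1 := by
      have h2 := hsplit i0
      have h3 := Nat.sub_mul u 1 c0
      have h4 : (u - 1) * c0 = (u - 1) * 1 := by omega
      exact Nat.eq_of_mul_eq_mul_left (by omega) h4
    intro i
    rw [hci i, hc01]
  have hRi1 : ∀ i : Fin u, ∃ P, R.filter (fun P => IsParallelClassOn (X \ G i) P) = {P} :=
    fun i => card_eq_one.mp (hc1 i)
  choose cls hcls using hRi1
  have hclsR : ∀ i, cls i ∈ R ∧ IsParallelClassOn (X \ G i) (cls i) := by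
    intro i
    have : cls i ∈ R.filter (fun P => IsParallelClassOn (X \ G i) P) := by
      rw [hcls i]; exact mem_singleton_self _
    exact mem_filter.mp this
  have hclsB : ∀ i, cls i ⊆ B := fun i => (hRcls _ (hclsR i).1).1
  -- the resolution
  have hRes : IsResolution V B' (Finset.univ.image (fun i => insert (nb i) (cls i))) := by
    constructor
    · intro Q hQ
      obtain ⟨i, _, rfl⟩ := mem_image.mp hQ
      constructor
      · intro b hb
        rcases mem_insert.mp hb with hh | hh
        · rw [hh]; exact mem_union_right _ (mem_image_of_mem nb (mem_univ i))
        · exact mem_union_left _ (hclsB i hh)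
      constructor
      · intro b hb
        rcases mem_insert.mp hb with hh | hh
        · rw [hh]; exact hnbV i
        · exact ((hclsR i).2.1 b hh).trans ((sdiff_subset).trans hXV)
      · intro x hx
        by_cases hxni : x ∈ nb i
        · refine ⟨nb i, ⟨mem_insert_self _ _, hxni⟩, ?_⟩
          rintro c ⟨hc, hxc⟩
          rcases mem_insert.mp hc with hh | hh
          · exact hh
          · exfalso
            have hxs := (hclsR i).2.1 c hh hxc
            rcases mem_insert.mp hxni with h2 | h2
            · exact hinfX (h2 ▸ (mem_sdiff.mp hxs).1)
            · exact (mem_sdiff.mp hxs).2 h2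
        · have hxX : x ∈ X := by
            rcases mem_insert.mp hx with hh | hh
            · exact absurd (by rw [hh]; exact mem_insert_self _ _ : x ∈ nb i) hxni
            · exact hh
          have hxGi : x ∉ G i := fun hh => hxni (mem_insert_of_mem hh)
          obtain ⟨b, ⟨hbP, hxb⟩, hbu⟩ := (hclsR i).2.2 x (mem_sdiff.mpr ⟨hxX, hxGi⟩)
          refine ⟨b, ⟨mem_insert_of_mem hbP, hxb⟩, ?_⟩
          rintro c ⟨hc, hxc⟩
          rcases mem_insert.mp hc with hh | hh
          · exact absurd (hh ▸ hxc) hxni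
          · exact hbu c ⟨hh, hxc⟩
    · intro b hb
      rcases mem_union.mp hb with hbB | hbI
      · obtain ⟨P, ⟨hPR, hbP⟩, hPu⟩ := hRcov b hbB
        obtain ⟨_, j, hPj⟩ := hRcls P hPR
        have hPcls : P = cls j := by
          have hPmem : P ∈ R.filter (fun P => IsParallelClassOn (X \ G j) P) :=
            mem_filter.mpr ⟨hPR, hPj⟩
          rw [hcls j] at hPmem
          exact mem_singleton.mp hPmem
        refine ⟨insert (nb j) (cls j), ⟨mem_image_of_mem _ (mem_univ j),
          mem_insert_of_mem (hPcls ▸ hbP)⟩, ?_⟩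
        rintro Q ⟨hQ, hbQ⟩
        obtain ⟨k, _, rfl⟩ := mem_image.mp hQ
        rcases mem_insert.mp hbQ with hh | hh
        · exact absurd ((hB3 b hbB).1 (by rw [hh]; exact mem_insert_self _ _)) hinfX
        · have h1 : cls k = cls j := by
            rw [← hPcls]
            exact hPu (cls k) ⟨(hclsR k).1, hh⟩
          have hkj : k = j := hholeu (cls j) k j (h1 ▸ (hclsR k).2) (hclsR j).2
          rw [hkj]
      · obtain ⟨i, _, rfl⟩ := mem_image.mp hbI
        refine ⟨insert (nb i) (cls i), ⟨mem_image_of_mem _ (mem_univ i),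
          mem_insert_self _ _⟩, ?_⟩
        rintro Q ⟨hQ, hbQ⟩
        obtain ⟨k, _, rfl⟩ := mem_image.mp hQ
        rcases mem_insert.mp hbQ with hh | hh
        · rw [hnbinj i k hh]
        · exact absurd (hclsB k hh) (hnbB i)
  -- assemble
  refine ⟨V, Finset.univ.biUnion W, B', A, ⟨hSTS, _, hRes⟩, ?_, ?_, ?_, ?_, ?_⟩
  · constructor
    · intro b hbA
      exact ⟨(hA3 b hbA).1, (hA3 b hbA).2.1⟩
    · intro x hx y hy hxy
      obtain ⟨i, _, hxi⟩ := mem_biUnion.mp hx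
      obtain ⟨j, _, hyj⟩ := mem_biUnion.mp hy
      have hij : i ≠ j := by
        intro hh
        subst hh
        obtain ⟨z, hz⟩ := card_eq_one.mp (hWc i)
        rw [hz] at hxi hyj
        exact hxy ((mem_singleton.mp hxi).trans (mem_singleton.mp hyj).symm)
      exact hApair x y ⟨i, j, hij, hxi, hyj⟩
  · intro z hz
    obtain ⟨i, _, hzi⟩ := mem_biUnion.mp hz
    exact hXV (hGX i (hWG i hzi))
  · exact hAB.trans subset_union_left
  · rw [hVdef, card_insert_of_notMem hinfX, hXc]
  · rw [card_biUnion (fun i _ j _ hij => hWd i j hij)]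
    rw [Finset.sum_congr rfl (fun i _ => hWc i), Finset.sum_const, card_univ,
      Fintype.card_fin, smul_eq_mul, mul_one]

open Finset in
lemma kts3 : ExistsKTSSubSTS (2 * 1 + 1) 1 := by
  classical
  have hpar : ∀ x ∈ ({0, 1, 2} : Finset ℕ), ∀ y ∈ ({0, 1, 2} : Finset ℕ), x ≠ y →
      ∃! b, b ∈ ({{0, 1, 2}} : Finset (Finset ℕ)) ∧ x ∈ b ∧ y ∈ b := by
    intro x hx y hy _
    exact ⟨{0, 1, 2}, ⟨mem_singleton_self _, hx, hy⟩, fun c hc => mem_singleton.mp hc.1⟩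
  refine ⟨{0, 1, 2}, {0}, {{0, 1, 2}}, ∅, ⟨⟨?_, hpar⟩, {{{0, 1, 2}}}, ?_, ?_⟩,
    ⟨?_, ?_⟩, ?_, empty_subset _, by decide, by decide⟩
  · intro b hb
    rw [mem_singleton.mp hb]
    exact ⟨Finset.Subset.refl _, by decide⟩
  · intro P hP
    rw [mem_singleton.mp hP]
    refine ⟨Finset.Subset.refl _, ?_, ?_⟩
    · intro b hb
      rw [mem_singleton.mp hb]
    · intro x hx
      exact ⟨{0, 1, 2}, ⟨mem_singleton_self _, hx⟩, fun c hc => mem_singleton.mp hc.1⟩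
  · intro b hb
    exact ⟨{{0, 1, 2}}, ⟨mem_singleton_self _, hb⟩,
      fun Q hQ => mem_singleton.mp hQ.1⟩
  · intro b hb
    exact absurd hb (notMem_empty b)
  · intro x hx y hy hxy
    exact absurd ((mem_singleton.mp hx).trans (mem_singleton.mp hy).symm) hxy
  · intro z hz
    rw [mem_singleton.mp hz]
    decide
open Finset in
lemma frame1 : ExistsFrameSubGDD 1 2 1 := by
  classical
  refine ⟨fun _ => ({0, 1} : Finset ℕ), fun _ => ({0} : Finset ℕ), ∅, ∅,
    ⟨⟨fun i => card_pair (by decide), ?_, ?_, ?_⟩, ∅, ?_, ?_⟩,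
    ⟨fun i => card_singleton _, ?_, ?_, ?_⟩,
    fun i => by intro z hz; rw [mem_singleton.mp hz]; exact mem_insert_self _ _,
    Finset.Subset.refl _⟩
  · intro i j hij
    exact absurd (Subsingleton.elim i j) hij
  · intro b hb
    exact absurd hb (notMem_empty b)
  · rintro x y ⟨i, j, hij, -⟩
    exact absurd (Subsingleton.elim i j) hij
  · intro P hP
    exact absurd hP (notMem_empty P)
  · intro b hb
    exact absurd hb (notMem_empty b)
  · intro i j hij
    exact absurd (Subsingleton.elim i j) hij
  · intro b hb
    exact absurd hb (notMem_empty b)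
  · rintro x y ⟨i, j, hij, -⟩
    exact absurd (Subsingleton.elim i j) hij

/-- An MK(2u+1) exists if and only if a Kirkman frame of type (1;2)^u exists. -/
theorem stmt2 (u : ℕ) (hu : 0 < u) :
    ExistsKTSSubSTS (2 * u + 1) u ↔ ExistsFrameSubGDD 1 2 u := by
  rcases Nat.lt_or_ge u 2 with h | h
  · have hu1 : u = 1 := by omega
    subst hu1
    exact ⟨fun _ => frame1, fun _ => kts3⟩
  · exact ⟨rev_dir hu, fwd_dir h⟩
end

section
/- If there exist a Kirkman frame of type (g;2g)^n and a resolvable transversal design RTD(3,m), then there exists a Kirkman frame of type (gm;2gm)^n. -/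
namespace KFaux

/-- rank of `x` in `s`: number of elements of `s` below `x`. -/
def rk (s : Finset ℕ) (x : ℕ) : ℕ := (s.filter (fun y => y < x)).card

lemma rk_lt {s : Finset ℕ} {x : ℕ} (hx : x ∈ s) : rk s x < s.card := by
  apply Finset.card_lt_card
  refine ⟨Finset.filter_subset _ _, fun hsub => ?_⟩
  have := hsub hx
  simp at this

lemma rk_lt_rk {s : Finset ℕ} {x y : ℕ} (hx : x ∈ s) (hy : y ∈ s) (hxy : x < y) :
    rk s x < rk s y := by
  apply Finset.card_lt_card
  constructor
  · intro z hz
    rw [Finset.mem_filter] at hz ⊢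
    exact ⟨hz.1, hz.2.trans hxy⟩
  · intro hsub
    have : x ∈ Finset.filter (fun z => z < y) s := Finset.mem_filter.2 ⟨hx, hxy⟩
    have := hsub this
    simp at this

lemma rk_injOn {s : Finset ℕ} {x y : ℕ} (hx : x ∈ s) (hy : y ∈ s)
    (h : rk s x = rk s y) : x = y := by
  rcases lt_trichotomy x y with h' | h' | h'
  · exact absurd h (Nat.ne_of_lt (rk_lt_rk hx hy h'))
  · exact h'
  · exact absurd h.symm (Nat.ne_of_lt (rk_lt_rk hy hx h'))

lemma rk_surj {s : Finset ℕ} {k : ℕ} (hk : k < s.card) : ∃ x ∈ s, rk s x = k := by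
  have himg : s.image (rk s) = Finset.range s.card := by
    apply Finset.eq_of_subset_of_card_le
    · intro z hz
      obtain ⟨x, hx, rfl⟩ := Finset.mem_image.1 hz
      exact Finset.mem_range.2 (rk_lt hx)
    · rw [Finset.card_range, Finset.card_image_of_injOn (fun x hx y hy h => rk_injOn hx hy h)]
  have : k ∈ s.image (rk s) := himg ▸ Finset.mem_range.2 hk
  obtain ⟨x, hx, h⟩ := Finset.mem_image.1 this
  exact ⟨x, hx, h⟩

/-- The inflated block. -/
def blk (b : Finset ℕ) (t : ℕ → ℕ) : Finset ℕ := b.image (fun x => Nat.pair x (t (rk b x)))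

lemma pair_mem_blk {b : Finset ℕ} {t : ℕ → ℕ} {x a : ℕ} :
    Nat.pair x a ∈ blk b t ↔ x ∈ b ∧ t (rk b x) = a := by
  simp only [blk, Finset.mem_image, Nat.pair_eq_pair]
  constructor
  · rintro ⟨y, hy, rfl, h2⟩; exact ⟨hy, h2⟩
  · rintro ⟨hx, h⟩; exact ⟨x, hx, rfl, h⟩

lemma mem_blk {b : Finset ℕ} {t : ℕ → ℕ} {z : ℕ} (hz : z ∈ blk b t) :
    ∃ x ∈ b, z = Nat.pair x (t (rk b x)) := by
  obtain ⟨x, hx, rfl⟩ := Finset.mem_image.1 hz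
  exact ⟨x, hx, rfl⟩

lemma card_blk (b : Finset ℕ) (t : ℕ → ℕ) : (blk b t).card = b.card :=
  Finset.card_image_of_injOn (fun x _ y _ h => (Nat.pair_eq_pair.1 h).1)

lemma blk_left_eq {b1 b2 : Finset ℕ} {t1 t2 : ℕ → ℕ} (h : blk b1 t1 = blk b2 t2) :
    b1 = b2 := by
  have h1 : ∀ (b : Finset ℕ) (t : ℕ → ℕ), (blk b t).image (fun z => z.unpair.1) = b := by
    intro b t
    rw [blk, Finset.image_image]
    have : ((fun z => (Nat.unpair z).1) ∘ fun x => Nat.pair x (t (rk b x))) = id := by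
      funext x; simp [Function.comp]
    rw [this, Finset.image_id]
  rw [← h1 b1 t1, ← h1 b2 t2, h]

lemma blk_eq_iff_forall {b : Finset ℕ} {t1 t2 : ℕ → ℕ} (h : blk b t1 = blk b t2)
    {x : ℕ} (hx : x ∈ b) : t1 (rk b x) = t2 (rk b x) := by
  have : Nat.pair x (t1 (rk b x)) ∈ blk b t2 := h ▸ pair_mem_blk.2 ⟨hx, rfl⟩
  exact (pair_mem_blk.1 this).2.symm

/-- representative of `s ∩ u` (the element, when the intersection is a singleton). -/
def pt (s u : Finset ℕ) : ℕ := if h : (s ∩ u).Nonempty then (s ∩ u).min' h else 0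

lemma pt_eq {s u : Finset ℕ} (h : (s ∩ u).card = 1) {x : ℕ} (hx : x ∈ s ∩ u) :
    pt s u = x := by
  obtain ⟨a, ha⟩ := Finset.card_eq_one.1 h
  rw [ha] at hx
  simp only [Finset.mem_singleton] at hx
  subst hx
  rw [pt, dif_pos (by rw [ha]; exact ⟨x, Finset.mem_singleton_self x⟩)]
  simp [ha]

lemma pt_mem {s u : Finset ℕ} (h : (s ∩ u).card = 1) : pt s u ∈ s ∩ u := by
  obtain ⟨a, ha⟩ := Finset.card_eq_one.1 h
  have := pt_eq h (x := a) (by rw [ha]; exact Finset.mem_singleton_self a)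
  rw [this, ha]; exact Finset.mem_singleton_self a

/-- the coordinate function of an RTD block. -/
def tau (H : Fin 3 → Finset ℕ) (s : Finset ℕ) : ℕ → ℕ :=
  fun k => if h : k < 3 then rk (H ⟨k, h⟩) (pt s (H ⟨k, h⟩)) else 0

lemma tau_coe (H : Fin 3 → Finset ℕ) (s : Finset ℕ) (k : Fin 3) :
    tau H s (k : ℕ) = rk (H k) (pt s (H k)) := by
  rw [tau, dif_pos k.isLt]

end KFaux
namespace KFaux

variable {m : ℕ} {H : Fin 3 → Finset ℕ} {T : Finset (Finset ℕ)}

/-- Every block of the RTD meets every group in exactly one point. -/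
lemma rtd_inter_card (hRTD : IsGDD m 3 H T) {s : Finset ℕ} (hs : s ∈ T) (k : Fin 3) :
    (s ∩ H k).card = 1 := by
  obtain ⟨hcard, hdisj, hblocks, hpairs⟩ := hRTD
  obtain ⟨hsub, hc3, hle⟩ := hblocks s hs
  have hcover : s ⊆ Finset.univ.biUnion (fun j => s ∩ H j) := by
    intro x hx
    obtain ⟨j, _, hj⟩ := Finset.mem_biUnion.1 (hsub hx)
    exact Finset.mem_biUnion.2 ⟨j, Finset.mem_univ j, Finset.mem_inter.2 ⟨hx, hj⟩⟩
  have h3 : 3 ≤ (s ∩ H 0).card + (s ∩ H 1).card + (s ∩ H 2).card := by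
    calc 3 = s.card := hc3.symm
    _ ≤ (Finset.univ.biUnion (fun j => s ∩ H j)).card := Finset.card_le_card hcover
    _ ≤ ∑ j, (s ∩ H j).card := Finset.card_biUnion_le
    _ = (s ∩ H 0).card + (s ∩ H 1).card + (s ∩ H 2).card := by
        rw [Fin.sum_univ_three]
  have h0 := hle 0
  have h1 := hle 1
  have h2 := hle 2
  have hall : (s ∩ H 0).card = 1 ∧ (s ∩ H 1).card = 1 ∧ (s ∩ H 2).card = 1 := by
    omega
  fin_cases k
  · exact hall.1
  · exact hall.2.1
  · exact hall.2.2

lemma rtd_pt_mem (hRTD : IsGDD m 3 H T) {s : Finset ℕ} (hs : s ∈ T) (k : Fin 3) :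
    pt s (H k) ∈ s ∩ H k := pt_mem (rtd_inter_card hRTD hs k)

lemma rtd_tau_lt (hRTD : IsGDD m 3 H T) {s : Finset ℕ} (hs : s ∈ T) (k : Fin 3) :
    tau H s (k : ℕ) < m := by
  rw [tau_coe]
  have := rk_lt (Finset.mem_inter.1 (rtd_pt_mem hRTD hs k)).2
  rwa [hRTD.1 k] at this

lemma rtd_tau_eq_iff (hRTD : IsGDD m 3 H T) {s : Finset ℕ} (hs : s ∈ T) (k : Fin 3)
    {u : ℕ} (hu : u ∈ H k) : tau H s (k : ℕ) = rk (H k) u ↔ u ∈ s := by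
  rw [tau_coe]
  constructor
  · intro h
    have hmem := rtd_pt_mem hRTD hs k
    have := rk_injOn (Finset.mem_inter.1 hmem).2 hu h
    rw [← this]
    exact (Finset.mem_inter.1 hmem).1
  · intro h
    rw [pt_eq (rtd_inter_card hRTD hs k) (Finset.mem_inter.2 ⟨h, hu⟩)]

/-- An RTD block is determined by its three group representatives. -/
lemma rtd_block_eq (hRTD : IsGDD m 3 H T) {s : Finset ℕ} (hs : s ∈ T) :
    s = {pt s (H 0), pt s (H 1), pt s (H 2)} := by
  have hm0 := rtd_pt_mem hRTD hs 0
  have hm1 := rtd_pt_mem hRTD hs 1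
  have hm2 := rtd_pt_mem hRTD hs 2
  have hdisj := hRTD.2.1
  have hne : ∀ (k l : Fin 3), k ≠ l → pt s (H k) ≠ pt s (H l) := by
    intro k l hkl heq
    have h1 := (Finset.mem_inter.1 (rtd_pt_mem hRTD hs k)).2
    have h2 := (Finset.mem_inter.1 (rtd_pt_mem hRTD hs l)).2
    rw [heq] at h1
    exact Finset.disjoint_left.1 (hdisj k l hkl) h1 h2
  symm
  apply Finset.eq_of_subset_of_card_le
  · intro z hz
    simp only [Finset.mem_insert, Finset.mem_singleton] at hz
    rcases hz with rfl | rfl | rfl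
    · exact (Finset.mem_inter.1 hm0).1
    · exact (Finset.mem_inter.1 hm1).1
    · exact (Finset.mem_inter.1 hm2).1
  · rw [(hRTD.2.2.1 s hs).2.1]
    rw [Finset.card_insert_of_notMem (by
      simp only [Finset.mem_insert, Finset.mem_singleton]
      push_neg
      exact ⟨hne 0 1 (by decide), hne 0 2 (by decide)⟩),
      Finset.card_insert_of_notMem (by
      simp only [Finset.mem_singleton]
      exact hne 1 2 (by decide))]
    simp

lemma rtd_tau_injOn (hRTD : IsGDD m 3 H T) {s1 s2 : Finset ℕ} (h1 : s1 ∈ T) (h2 : s2 ∈ T)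
    (h : ∀ k : Fin 3, tau H s1 (k : ℕ) = tau H s2 (k : ℕ)) : s1 = s2 := by
  have hpt : ∀ k : Fin 3, pt s1 (H k) = pt s2 (H k) := by
    intro k
    have hk := h k
    rw [tau_coe, tau_coe] at hk
    exact rk_injOn (Finset.mem_inter.1 (rtd_pt_mem hRTD h1 k)).2
      (Finset.mem_inter.1 (rtd_pt_mem hRTD h2 k)).2 hk
  rw [rtd_block_eq hRTD h1, rtd_block_eq hRTD h2, hpt 0, hpt 1, hpt 2]

end KFaux
namespace KFaux

variable {m : ℕ} {H : Fin 3 → Finset ℕ} {T : Finset (Finset ℕ)}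

/-- the inflated block collection from blocks `P` and RTD blocks `Q`. -/
def pc (H : Fin 3 → Finset ℕ) (P Q : Finset (Finset ℕ)) : Finset (Finset ℕ) :=
  (P ×ˢ Q).image (fun q => blk q.1 (tau H q.2))

lemma mem_pc {P Q : Finset (Finset ℕ)} {c : Finset ℕ} :
    c ∈ pc H P Q ↔ ∃ b ∈ P, ∃ s ∈ Q, c = blk b (tau H s) := by
  simp only [pc, Finset.mem_image, Finset.mem_product, Prod.exists]
  constructor
  · rintro ⟨b, s, ⟨hb, hs⟩, rfl⟩; exact ⟨b, hb, s, hs, rfl⟩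
  · rintro ⟨b, hb, s, hs, rfl⟩; exact ⟨b, s, ⟨hb, hs⟩, rfl⟩

lemma pc_mono {P P' Q Q' : Finset (Finset ℕ)} (h1 : P ⊆ P') (h2 : Q ⊆ Q') :
    pc H P Q ⊆ pc H P' Q' := by
  intro c hc
  obtain ⟨b, hb, s, hs, rfl⟩ := mem_pc.1 hc
  exact mem_pc.2 ⟨b, h1 hb, s, h2 hs, rfl⟩

/-- the inflated point set. -/
def infl (A : Finset ℕ) (m : ℕ) : Finset ℕ :=
  (A ×ˢ Finset.range m).image (fun q => Nat.pair q.1 q.2)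

lemma pair_mem_infl {A : Finset ℕ} {x a : ℕ} :
    Nat.pair x a ∈ infl A m ↔ x ∈ A ∧ a < m := by
  simp only [infl, Finset.mem_image, Finset.mem_product, Finset.mem_range, Prod.exists,
    Nat.pair_eq_pair]
  constructor
  · rintro ⟨y, b, ⟨hy, hb⟩, rfl, rfl⟩; exact ⟨hy, hb⟩
  · rintro ⟨hx, ha⟩; exact ⟨x, a, ⟨hx, ha⟩, rfl, rfl⟩

lemma mem_infl {A : Finset ℕ} {z : ℕ} (hz : z ∈ infl A m) :
    ∃ x ∈ A, ∃ a < m, z = Nat.pair x a := by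
  obtain ⟨⟨x, a⟩, hxa, rfl⟩ := Finset.mem_image.1 hz
  rw [Finset.mem_product, Finset.mem_range] at hxa
  exact ⟨x, hxa.1, a, hxa.2, rfl⟩

lemma card_infl (A : Finset ℕ) (m : ℕ) : (infl A m).card = A.card * m := by
  rw [infl, Finset.card_image_of_injOn, Finset.card_product, Finset.card_range]
  intro p _ q _ h
  have := Nat.pair_eq_pair.1 h
  exact Prod.ext this.1 this.2

lemma infl_mono {A B : Finset ℕ} (h : A ⊆ B) : infl A m ⊆ infl B m := by
  intro z hz
  obtain ⟨x, hx, a, ha, rfl⟩ := mem_infl hz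
  exact pair_mem_infl.2 ⟨h hx, ha⟩

lemma infl_disjoint {A B : Finset ℕ} (h : Disjoint A B) :
    Disjoint (infl A m) (infl B m) := by
  rw [Finset.disjoint_left]
  intro z hzA hzB
  obtain ⟨x, hx, a, ha, rfl⟩ := mem_infl hzA
  have := (pair_mem_infl.1 hzB).1
  exact Finset.disjoint_left.1 h hx this

lemma infl_biUnion {u : ℕ} (G : Fin u → Finset ℕ) :
    infl (Finset.univ.biUnion G) m = Finset.univ.biUnion (fun i => infl (G i) m) := by
  ext z
  constructor
  · intro hz
    obtain ⟨x, hx, a, ha, rfl⟩ := mem_infl hz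
    obtain ⟨i, _, hi⟩ := Finset.mem_biUnion.1 hx
    exact Finset.mem_biUnion.2 ⟨i, Finset.mem_univ i, pair_mem_infl.2 ⟨hi, ha⟩⟩
  · intro hz
    obtain ⟨i, _, hi⟩ := Finset.mem_biUnion.1 hz
    obtain ⟨x, hx, a, ha, rfl⟩ := mem_infl hi
    exact pair_mem_infl.2 ⟨Finset.mem_biUnion.2 ⟨i, Finset.mem_univ i, hx⟩, ha⟩

lemma infl_sdiff {A B : Finset ℕ} : infl (A \ B) m = infl A m \ infl B m := by
  ext z
  constructor
  · intro hz
    obtain ⟨x, hx, a, ha, rfl⟩ := mem_infl hz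
    rw [Finset.mem_sdiff] at hx
    rw [Finset.mem_sdiff]
    refine ⟨pair_mem_infl.2 ⟨hx.1, ha⟩, fun h => hx.2 (pair_mem_infl.1 h).1⟩
  · intro hz
    rw [Finset.mem_sdiff] at hz
    obtain ⟨x, hx, a, ha, rfl⟩ := mem_infl hz.1
    refine pair_mem_infl.2 ⟨Finset.mem_sdiff.2 ⟨hx, fun h => hz.2 (pair_mem_infl.2 ⟨h, ha⟩)⟩, ha⟩

/-- two inflated blocks coincide iff their constituents do. -/
lemma pc_inj (hRTD : IsGDD m 3 H T) {b b2 s s2 : Finset ℕ} (hb3 : b.card = 3)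
    (hs : s ∈ T) (hs2 : s2 ∈ T) (h : blk b (tau H s) = blk b2 (tau H s2)) :
    b = b2 ∧ s = s2 := by
  have hbb : b = b2 := blk_left_eq h
  subst hbb
  refine ⟨rfl, rtd_tau_injOn hRTD hs hs2 fun k => ?_⟩
  obtain ⟨x, hx, hrk⟩ := rk_surj (s := b) (k := (k : ℕ)) (by rw [hb3]; exact k.isLt)
  have := blk_eq_iff_forall h hx
  rwa [hrk] at this

/-- inflating a GDD by an RTD(3,m) gives a GDD. -/
lemma gdd_inflate (hRTD : IsGDD m 3 H T) {g0 u : ℕ} {G0 : Fin u → Finset ℕ}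
    {B0 : Finset (Finset ℕ)} (hG : IsGDD g0 u G0 B0) :
    IsGDD (g0 * m) u (fun i => infl (G0 i) m) (pc H B0 T) := by
  obtain ⟨hcard, hdisj, hblocks, hpairs⟩ := hG
  refine ⟨fun i => by rw [card_infl, hcard], fun i j hij => infl_disjoint (hdisj i j hij),
    ?_, ?_⟩
  · intro c hc
    obtain ⟨b, hb, s, hs, rfl⟩ := mem_pc.1 hc
    obtain ⟨hbsub, hb3, hble⟩ := hblocks b hb
    have htau : ∀ x ∈ b, tau H s (rk b x) < m := by
      intro x hx
      have hkx : rk b x < 3 := hb3 ▸ rk_lt hx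
      exact rtd_tau_lt hRTD hs ⟨rk b x, hkx⟩
    refine ⟨?_, by rw [card_blk, hb3], ?_⟩
    · intro z hz
      obtain ⟨x, hx, rfl⟩ := mem_blk hz
      obtain ⟨i, _, hi⟩ := Finset.mem_biUnion.1 (hbsub hx)
      exact Finset.mem_biUnion.2 ⟨i, Finset.mem_univ i,
        pair_mem_infl.2 ⟨hi, htau x hx⟩⟩
    · intro i
      apply Finset.card_le_one.2
      intro z1 hz1 z2 hz2
      rw [Finset.mem_inter] at hz1 hz2
      obtain ⟨x1, hx1, rfl⟩ := mem_blk hz1.1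
      obtain ⟨x2, hx2, rfl⟩ := mem_blk hz2.1
      have hg1 := (pair_mem_infl.1 hz1.2).1
      have hg2 := (pair_mem_infl.1 hz2.2).1
      have : x1 = x2 := Finset.card_le_one.1 (hble i)
        _ (Finset.mem_inter.2 ⟨hx1, hg1⟩) _ (Finset.mem_inter.2 ⟨hx2, hg2⟩)
      rw [this]
  · rintro ξ η ⟨i, j, hij, hξ, hη⟩
    obtain ⟨x, hx, a, ha, rfl⟩ := mem_infl hξ
    obtain ⟨y, hy, c, hc, rfl⟩ := mem_infl hη
    have hxy : x ≠ y := fun h => Finset.disjoint_left.1 (hdisj i j hij) hx (h ▸ hy)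
    obtain ⟨b, ⟨hbB, hxb, hyb⟩, hbuniq⟩ := hpairs x y ⟨i, j, hij, hx, hy⟩
    have hb3 := (hblocks b hbB).2.1
    have hkx : rk b x < 3 := hb3 ▸ rk_lt hxb
    have hky : rk b y < 3 := hb3 ▸ rk_lt hyb
    set k : Fin 3 := ⟨rk b x, hkx⟩ with hk
    set l : Fin 3 := ⟨rk b y, hky⟩ with hl
    have hkl : k ≠ l := by
      intro h
      exact hxy (rk_injOn hxb hyb (congrArg Fin.val h))
    obtain ⟨u0, hu0, hu0rk⟩ := rk_surj (s := H k) (k := a) (by rw [hRTD.1 k]; exact ha)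
    obtain ⟨v0, hv0, hv0rk⟩ := rk_surj (s := H l) (k := c) (by rw [hRTD.1 l]; exact hc)
    obtain ⟨s, ⟨hsT, hu0s, hv0s⟩, hsuniq⟩ := hRTD.2.2.2 u0 v0 ⟨k, l, hkl, hu0, hv0⟩
    refine ⟨blk b (tau H s), ⟨mem_pc.2 ⟨b, hbB, s, hsT, rfl⟩, ?_, ?_⟩, ?_⟩
    · refine pair_mem_blk.2 ⟨hxb, ?_⟩
      have : tau H s (k : ℕ) = rk (H k) u0 := (rtd_tau_eq_iff hRTD hsT k hu0).2 hu0s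
      rw [show (k : ℕ) = rk b x from rfl] at this
      rw [this, hu0rk]
    · refine pair_mem_blk.2 ⟨hyb, ?_⟩
      have : tau H s (l : ℕ) = rk (H l) v0 := (rtd_tau_eq_iff hRTD hsT l hv0).2 hv0s
      rw [show (l : ℕ) = rk b y from rfl] at this
      rw [this, hv0rk]
    · rintro c' ⟨hc', hxc', hyc'⟩
      obtain ⟨b', hb', s', hs', rfl⟩ := mem_pc.1 hc'
      obtain ⟨hxb', htx⟩ := pair_mem_blk.1 hxc'
      obtain ⟨hyb', hty⟩ := pair_mem_blk.1 hyc'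
      have hbb : b' = b := hbuniq b' ⟨hb', hxb', hyb'⟩
      subst hbb
      have hss : s' = s := by
        apply hsuniq
        refine ⟨hs', ?_, ?_⟩
        · rw [← hu0rk] at htx
          exact (rtd_tau_eq_iff hRTD hs' k hu0).1 htx
        · rw [← hv0rk] at hty
          exact (rtd_tau_eq_iff hRTD hs' l hv0).1 hty
      rw [hss]

/-- inflating a parallel class on `Y` by a parallel class of the RTD gives a
parallel class on the inflated point set. -/
lemma par_inflate (hRTD : IsGDD m 3 H T) {Y : Finset ℕ} {P Q : Finset (Finset ℕ)}
    (hP : IsParallelClassOn Y P) (hP3 : ∀ b ∈ P, b.card = 3) (hQT : Q ⊆ T)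
    (hQ : IsParallelClassOn (Finset.univ.biUnion H) Q) :
    IsParallelClassOn (infl Y m) (pc H P Q) := by
  constructor
  · intro c hc
    obtain ⟨b, hb, s, hs, rfl⟩ := mem_pc.1 hc
    intro z hz
    obtain ⟨x, hx, rfl⟩ := mem_blk hz
    have hkx : rk b x < 3 := (hP3 b hb) ▸ rk_lt hx
    exact pair_mem_infl.2 ⟨hP.1 b hb hx, rtd_tau_lt hRTD (hQT hs) ⟨rk b x, hkx⟩⟩
  · intro ξ hξ
    obtain ⟨x, hx, a, ha, rfl⟩ := mem_infl hξ
    obtain ⟨b, ⟨hbP, hxb⟩, hbuniq⟩ := hP.2 x hx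
    have hkx : rk b x < 3 := (hP3 b hbP) ▸ rk_lt hxb
    set k : Fin 3 := ⟨rk b x, hkx⟩ with hk
    obtain ⟨u0, hu0, hu0rk⟩ := rk_surj (s := H k) (k := a) (by rw [hRTD.1 k]; exact ha)
    obtain ⟨s, ⟨hsQ, hu0s⟩, hsuniq⟩ := hQ.2 u0
      (Finset.mem_biUnion.2 ⟨k, Finset.mem_univ k, hu0⟩)
    refine ⟨blk b (tau H s), ⟨mem_pc.2 ⟨b, hbP, s, hsQ, rfl⟩, ?_⟩, ?_⟩
    · refine pair_mem_blk.2 ⟨hxb, ?_⟩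
      have : tau H s (k : ℕ) = rk (H k) u0 := (rtd_tau_eq_iff hRTD (hQT hsQ) k hu0).2 hu0s
      rw [show (k : ℕ) = rk b x from rfl] at this
      rw [this, hu0rk]
    · rintro c' ⟨hc', hxc'⟩
      obtain ⟨b', hb', s', hs', rfl⟩ := mem_pc.1 hc'
      obtain ⟨hxb', htx⟩ := pair_mem_blk.1 hxc'
      have hbb : b' = b := hbuniq b' ⟨hb', hxb'⟩
      subst hbb
      have hss : s' = s := by
        apply hsuniq
        refine ⟨hs', ?_⟩
        rw [← hu0rk] at htx
        exact (rtd_tau_eq_iff hRTD (hQT hs') k hu0).1 htx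
      rw [hss]

end KFaux

/-- If there exist a Kirkman frame of type (g;2g)^n and an RTD(3,m), then there
exists a Kirkman frame of type (gm;2gm)^n. -/
theorem stmt3 (g m n : ℕ) (hg : 0 < g) (hm : 0 < m) (hn : 0 < n)
    (h1 : ExistsFrameSubGDD g (2 * g) n) (h2 : ExistsRTD3 m) :
    ExistsFrameSubGDD (g * m) (2 * (g * m)) n := by
  obtain ⟨G, W, B, A, ⟨hGDD, R, hRmem, hRuniq⟩, hWGDD, hWG, hAB⟩ := h1
  obtain ⟨H, T, hRTD, S, hSmem, hSuniq⟩ := h2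
  refine ⟨fun i => KFaux.infl (G i) m, fun i => KFaux.infl (W i) m,
    KFaux.pc H B T, KFaux.pc H A T, ⟨?_, ?_⟩, ?_, fun i => KFaux.infl_mono (hWG i),
    KFaux.pc_mono hAB (le_refl T)⟩
  · have h := KFaux.gdd_inflate hRTD hGDD
    rwa [show 2 * g * m = 2 * (g * m) by ring] at h
  · refine ⟨(R ×ˢ S).image (fun q => KFaux.pc H q.1 q.2), ?_, ?_⟩
    · intro P' hP'
      obtain ⟨⟨P, Q⟩, hPQ, rfl⟩ := Finset.mem_image.1 hP'
      rw [Finset.mem_product] at hPQ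
      obtain ⟨hPB, i, hPpar⟩ := hRmem P hPQ.1
      obtain ⟨hQT, hQpar⟩ := hSmem Q hPQ.2
      refine ⟨KFaux.pc_mono hPB hQT, i, ?_⟩
      have h := KFaux.par_inflate hRTD hPpar
        (fun b hb => (hGDD.2.2.1 b (hPB hb)).2.1) hQT hQpar
      rwa [KFaux.infl_sdiff, KFaux.infl_biUnion] at h
    · intro c hc
      obtain ⟨b, hbB, s, hsT, rfl⟩ := KFaux.mem_pc.1 hc
      obtain ⟨P, ⟨hPR, hbP⟩, hPuniq⟩ := hRuniq b hbB
      obtain ⟨Q, ⟨hQS, hsQ⟩, hQuniq⟩ := hSuniq s hsT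
      refine ⟨KFaux.pc H P Q,
        ⟨Finset.mem_image.2 ⟨(P, Q), Finset.mem_product.2 ⟨hPR, hQS⟩, rfl⟩,
          KFaux.mem_pc.2 ⟨b, hbP, s, hsQ, rfl⟩⟩, ?_⟩
      rintro P' ⟨hP'mem, hcP'⟩
      obtain ⟨⟨P2, Q2⟩, hPQ2, rfl⟩ := Finset.mem_image.1 hP'mem
      rw [Finset.mem_product] at hPQ2
      obtain ⟨b2, hb2, s2, hs2, heq⟩ := KFaux.mem_pc.1 hcP'
      have hb3 := (hGDD.2.2.1 b hbB).2.1
      obtain ⟨hbeq, hseq⟩ :=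
        KFaux.pc_inj hRTD hb3 hsT ((hSmem Q2 hPQ2.2).1 hs2) heq
      subst hbeq
      subst hseq
      have hP2 : P2 = P := hPuniq P2 ⟨hPQ2.1, hb2⟩
      have hQ2 : Q2 = Q := hQuniq Q2 ⟨hPQ2.2, hs2⟩
      rw [hP2, hQ2]
  · exact KFaux.gdd_inflate hRTD hWGDD
end

section
/- If there exist a Kirkman frame of type (gm;2gm)^n and a Kirkman frame of type (g;2g)^{m+1}, then there exists a Kirkman frame of type (g;2g)^{mn+1}. -/
/- ===== auxiliary machinery (added for the proof) ===== -/

open Finset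

section Aux

lemma biUnion_fin_succ {m : ℕ} (F : Fin (m + 1) → Finset ℕ) :
    Finset.univ.biUnion F
      = F (Fin.last m) ∪ Finset.univ.biUnion (fun j : Fin m => F j.castSucc) := by
  ext x
  simp only [mem_biUnion, mem_union, mem_univ, true_and]
  constructor
  · rintro ⟨j, hj⟩
    rcases eq_or_ne j (Fin.last m) with rfl | hne
    · exact Or.inl hj
    · obtain ⟨j', rfl⟩ := Fin.exists_castSucc_eq.2 hne
      exact Or.inr ⟨j', hj⟩
  · rintro (h | ⟨j, hj⟩)
    · exact ⟨_, h⟩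
    · exact ⟨_, hj⟩

lemma exuniq_of_subset {E D : Finset (Finset ℕ)} {x y : ℕ}
    (hD : ∃! b, b ∈ D ∧ x ∈ b ∧ y ∈ b) (hDE : D ⊆ E)
    (hloc : ∀ b ∈ E, x ∈ b → y ∈ b → b ∈ D) :
    ∃! b, b ∈ E ∧ x ∈ b ∧ y ∈ b := by
  obtain ⟨b, ⟨hb, hxb, hyb⟩, hu⟩ := hD
  exact ⟨b, ⟨hDE hb, hxb, hyb⟩, fun c ⟨hc, hxc, hyc⟩ => hu c ⟨hloc c hc hxc hyc, hxc, hyc⟩⟩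

lemma exuniq_swap {E : Finset (Finset ℕ)} {x y : ℕ}
    (h : ∃! b, b ∈ E ∧ x ∈ b ∧ y ∈ b) : ∃! b, b ∈ E ∧ y ∈ b ∧ x ∈ b := by
  obtain ⟨b, ⟨hb, hxb, hyb⟩, hu⟩ := h
  exact ⟨b, ⟨hb, hyb, hxb⟩, fun c ⟨hc, hyc, hxc⟩ => hu c ⟨hc, hxc, hyc⟩⟩

lemma not_card_le_one {s : Finset ℕ} {x y : ℕ} (hx : x ∈ s) (hy : y ∈ s) (hxy : x ≠ y) :
    ¬ s.card ≤ 1 := by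
  have : 1 < s.card := Finset.one_lt_card.2 ⟨x, hx, y, hy, hxy⟩
  omega

lemma parallel_union {X Y : Finset ℕ} {P Q : Finset (Finset ℕ)}
    (hP : IsParallelClassOn X P) (hQ : IsParallelClassOn Y Q) (hXY : Disjoint X Y) :
    IsParallelClassOn (X ∪ Y) (P ∪ Q) := by
  constructor
  · intro b hb
    rcases mem_union.1 hb with h | h
    · exact (hP.1 b h).trans subset_union_left
    · exact (hQ.1 b h).trans subset_union_right
  · intro x hx
    rcases mem_union.1 hx with hxX | hxY'
    · obtain ⟨b, ⟨hb, hxb⟩, hu⟩ := hP.2 x hxX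
      refine ⟨b, ⟨mem_union_left _ hb, hxb⟩, ?_⟩
      rintro c ⟨hc, hxc⟩
      rcases mem_union.1 hc with hc' | hc'
      · exact hu c ⟨hc', hxc⟩
      · exact absurd (hQ.1 c hc' hxc) (fun h => disjoint_left.1 hXY hxX h)
    · obtain ⟨b, ⟨hb, hxb⟩, hu⟩ := hQ.2 x hxY'
      refine ⟨b, ⟨mem_union_right _ hb, hxb⟩, ?_⟩
      rintro c ⟨hc, hxc⟩
      rcases mem_union.1 hc with hc' | hc'
      · exact absurd (hP.1 c hc' hxc) (fun h => disjoint_right.1 hXY hxY' h)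
      · exact hu c ⟨hc', hxc⟩

lemma parallel_biUnion {n : ℕ} {X : Fin n → Finset ℕ} {Q : Fin n → Finset (Finset ℕ)}
    (hdisj : ∀ i j, i ≠ j → Disjoint (X i) (X j))
    (hpar : ∀ i, IsParallelClassOn (X i) (Q i)) :
    IsParallelClassOn (Finset.univ.biUnion X) (Finset.univ.biUnion Q) := by
  constructor
  · intro b hb
    obtain ⟨i, -, hi⟩ := mem_biUnion.1 hb
    exact ((hpar i).1 b hi).trans (subset_biUnion_of_mem X (mem_univ i))
  · intro x hx
    obtain ⟨i, -, hxi⟩ := mem_biUnion.1 hx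
    obtain ⟨b, ⟨hb, hxb⟩, hu⟩ := (hpar i).2 x hxi
    refine ⟨b, ⟨mem_biUnion.2 ⟨i, mem_univ i, hb⟩, hxb⟩, ?_⟩
    rintro c ⟨hc, hxc⟩
    obtain ⟨k, -, hk⟩ := mem_biUnion.1 hc
    have hxk : x ∈ X k := (hpar k).1 c hk hxc
    have : k = i := by
      by_contra hne
      exact disjoint_left.1 (hdisj k i hne) hxk hxi
    subst this
    exact hu c ⟨hk, hxc⟩

lemma parallel_group_unique {u : ℕ} {G : Fin u → Finset ℕ} {P : Finset (Finset ℕ)} {i j : Fin u}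
    (hdisj : ∀ i j, i ≠ j → Disjoint (G i) (G j)) (hpos : ∀ k, (G k).Nonempty)
    (hi : IsParallelClassOn (Finset.univ.biUnion G \ G i) P)
    (hj : IsParallelClassOn (Finset.univ.biUnion G \ G j) P) : i = j := by
  by_contra hne
  obtain ⟨x, hx⟩ := hpos j
  have hxX : x ∈ Finset.univ.biUnion G := mem_biUnion.2 ⟨j, mem_univ j, hx⟩
  have hxi : x ∈ Finset.univ.biUnion G \ G i :=
    mem_sdiff.2 ⟨hxX, fun h => disjoint_left.1 (hdisj i j hne) h hx⟩
  obtain ⟨b, ⟨hb, hxb⟩, -⟩ := hi.2 x hxi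
  have := hj.1 b hb hxb
  exact (mem_sdiff.1 this).2 hx

lemma setid1 {S Hi Xb Gs : Finset ℕ} (h1 : Gs ⊆ Hi) (h2 : Hi ⊆ Xb) (h3 : Disjoint S Xb) :
    ((S ∪ Hi) \ Gs) ∪ (Xb \ Hi) = (S ∪ Xb) \ Gs := by
  ext x
  simp only [mem_union, mem_sdiff]
  constructor
  · rintro (⟨hu, hg⟩ | ⟨hx, hh⟩)
    · rcases hu with h | h
      · exact ⟨Or.inl h, hg⟩
      · exact ⟨Or.inr (h2 h), hg⟩
    · exact ⟨Or.inr hx, fun hc => hh (h1 hc)⟩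
  · rintro ⟨hu, hg⟩
    rcases hu with h | h
    · exact Or.inl ⟨Or.inl h, hg⟩
    · by_cases hh : x ∈ Hi
      · exact Or.inl ⟨Or.inr hh, hg⟩
      · exact Or.inr ⟨h, hh⟩

end Aux

section Counting

open scoped Classical in
noncomputable def classesMissing {u : ℕ} (G : Fin u → Finset ℕ)
    (R : Finset (Finset (Finset ℕ))) (i : Fin u) : Finset (Finset (Finset ℕ)) :=
  R.filter (fun P => IsParallelClassOn (Finset.univ.biUnion G \ G i) P)

lemma mem_classesMissing {u : ℕ} {G : Fin u → Finset ℕ} {R : Finset (Finset (Finset ℕ))}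
    {i : Fin u} {P : Finset (Finset ℕ)} :
    P ∈ classesMissing G R i ↔ P ∈ R ∧ IsParallelClassOn (Finset.univ.biUnion G \ G i) P := by
  classical
  simp [classesMissing]

lemma frame_class_count {h u : ℕ} (hh : 0 < h) (hu : 2 ≤ u)
    {G : Fin u → Finset ℕ} {B : Finset (Finset ℕ)} {R : Finset (Finset (Finset ℕ))}
    (hGDD : IsGDD h u G B)
    (hR1 : ∀ P ∈ R, P ⊆ B ∧ ∃ i, IsParallelClassOn (Finset.univ.biUnion G \ G i) P)
    (hR2 : ∀ b ∈ B, ∃! P, P ∈ R ∧ b ∈ P) :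
    ∀ i, 2 * (classesMissing G R i).card = h := by
  classical
  obtain ⟨hcard, hdisj, hblocks, hpairs⟩ := hGDD
  set X := Finset.univ.biUnion G with hX
  have hpos : ∀ k, (G k).Nonempty := fun k => card_pos.1 (by rw [hcard k]; exact hh)
  have hXcard : X.card = u * h := by
    rw [hX, card_biUnion (fun i _ j _ hij => hdisj i j hij)]
    simp [hcard, mul_comm]
  have stepA : ∀ j0 : Fin u, ∀ x ∈ G j0,
      2 * (B.filter (fun b => x ∈ b)).card = (u - 1) * h := by
    intro j0 x hx
    have hxX : x ∈ X := mem_biUnion.2 ⟨j0, mem_univ j0, hx⟩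
    have hY : X \ G j0 = (B.filter (fun b => x ∈ b)).biUnion (fun b => b.erase x) := by
      ext y
      simp only [mem_sdiff, mem_biUnion, mem_filter, mem_erase]
      constructor
      · rintro ⟨hyX, hyj0⟩
        obtain ⟨j, _, hyj⟩ := mem_biUnion.1 hyX
        have hjne : j ≠ j0 := fun he => hyj0 (he ▸ hyj)
        obtain ⟨b, ⟨hb, hxb, hyb⟩, -⟩ := hpairs x y ⟨j0, j, Ne.symm hjne, hx, hyj⟩
        exact ⟨b, ⟨hb, hxb⟩, fun he => hyj0 (he ▸ hx), hyb⟩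
      · rintro ⟨b, ⟨hb, hxb⟩, hyx, hyb⟩
        obtain ⟨hbX, hb3, hbg⟩ := hblocks b hb
        refine ⟨hbX hyb, fun hyj0 => ?_⟩
        have : 1 < (b ∩ G j0).card := Finset.one_lt_card.2
          ⟨x, mem_inter.2 ⟨hxb, hx⟩, y, mem_inter.2 ⟨hyb, hyj0⟩, fun he => hyx he.symm⟩
        exact absurd (hbg j0) (by omega)
    have hdisjb : ∀ b ∈ B.filter (fun b => x ∈ b), ∀ c ∈ B.filter (fun b => x ∈ b),
        b ≠ c → Disjoint (b.erase x) (c.erase x) := by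
      intro b hb c hc hbc
      rw [disjoint_left]
      intro y hyb hyc
      obtain ⟨hb', hxb⟩ := mem_filter.1 hb
      obtain ⟨hc', hxc⟩ := mem_filter.1 hc
      obtain ⟨hyx, hyb'⟩ := mem_erase.1 hyb
      obtain ⟨-, hyc'⟩ := mem_erase.1 hyc
      obtain ⟨hbX, -, hbg⟩ := hblocks b hb'
      obtain ⟨j, -, hyj⟩ := mem_biUnion.1 (hbX hyb')
      have hjne : j0 ≠ j := by
        intro he
        rw [he] at hx
        have : 1 < (b ∩ G j).card := Finset.one_lt_card.2
          ⟨x, mem_inter.2 ⟨hxb, hx⟩, y, mem_inter.2 ⟨hyb', hyj⟩, fun he2 => hyx he2.symm⟩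
        exact absurd (hbg j) (by omega)
      obtain ⟨d, -, hud⟩ := hpairs x y ⟨j0, j, hjne, hx, hyj⟩
      have h1 : b = d := hud b ⟨hb', hxb, hyb'⟩
      have h2 : c = d := hud c ⟨hc', hxc, hyc'⟩
      exact hbc (h1.trans h2.symm)
    have hYcard : (X \ G j0).card = (u - 1) * h := by
      rw [card_sdiff_of_subset (fun y hy => mem_biUnion.2 ⟨j0, mem_univ j0, hy⟩), hXcard, hcard]
      have : 1 ≤ u := le_trans (by norm_num) hu
      rw [Nat.sub_mul, one_mul]
    rw [hY, card_biUnion hdisjb] at hYcard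
    have herase : ∀ b ∈ B.filter (fun b => x ∈ b), (b.erase x).card = 2 := by
      intro b hb
      obtain ⟨hb', hxb⟩ := mem_filter.1 hb
      rw [card_erase_of_mem hxb, (hblocks b hb').2.1]
    rw [Finset.sum_congr rfl herase, Finset.sum_const, smul_eq_mul, mul_comm] at hYcard
    exact hYcard
  have stepB : ∀ j0 : Fin u, ∀ x ∈ G j0,
      (B.filter (fun b => x ∈ b)).card
        = ∑ j ∈ Finset.univ.erase j0, (classesMissing G R j).card := by
    intro j0 x hx
    set Rx := R.filter (fun P => ∃ b ∈ P, x ∈ b) with hRxdef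
    have hBx : B.filter (fun b => x ∈ b) = Rx.biUnion (fun P => P.filter (fun b => x ∈ b)) := by
      ext b
      simp only [mem_filter, mem_biUnion, hRxdef]
      constructor
      · rintro ⟨hb, hxb⟩
        obtain ⟨P, ⟨hP, hbP⟩, -⟩ := hR2 b hb
        exact ⟨P, ⟨⟨hP, b, hbP, hxb⟩, hbP, hxb⟩⟩
      · rintro ⟨P, ⟨hP, -⟩, hbP, hxb⟩
        exact ⟨(hR1 P hP).1 hbP, hxb⟩
    have hdisjP : ∀ P ∈ Rx, ∀ Q ∈ Rx, P ≠ Q →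
        Disjoint (P.filter (fun b => x ∈ b)) (Q.filter (fun b => x ∈ b)) := by
      intro P hP Q hQ hPQ
      rw [disjoint_left]
      intro b hbP hbQ
      obtain ⟨hbP', -⟩ := mem_filter.1 hbP
      obtain ⟨hbQ', -⟩ := mem_filter.1 hbQ
      have hP' := (mem_filter.1 hP).1
      have hQ' := (mem_filter.1 hQ).1
      obtain ⟨D, -, hud⟩ := hR2 b ((hR1 P hP').1 hbP')
      exact hPQ ((hud P ⟨hP', hbP'⟩).trans (hud Q ⟨hQ', hbQ'⟩).symm)
    have hone : ∀ P ∈ Rx, (P.filter (fun b => x ∈ b)).card = 1 := by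
      intro P hP
      obtain ⟨hP', b0, hb0, hxb0⟩ := mem_filter.1 hP
      obtain ⟨-, i, hpar⟩ := hR1 P hP'
      have hxXi : x ∈ X \ G i := hpar.1 b0 hb0 hxb0
      obtain ⟨b, ⟨hbP, hxb⟩, hub⟩ := hpar.2 x hxXi
      rw [card_eq_one]
      refine ⟨b, ?_⟩
      ext c
      simp only [mem_filter, mem_singleton]
      constructor
      · rintro ⟨hcP, hxc⟩; exact hub c ⟨hcP, hxc⟩
      · rintro rfl; exact ⟨hbP, hxb⟩
    have hRx : Rx = (Finset.univ.erase j0).biUnion (classesMissing G R) := by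
      ext P
      simp only [mem_biUnion, mem_erase, mem_univ, true_and, and_true, hRxdef, mem_filter,
        mem_classesMissing]
      constructor
      · rintro ⟨hP, b, hbP, hxb⟩
        obtain ⟨-, i, hpar⟩ := hR1 P hP
        have : x ∈ X \ G i := hpar.1 b hbP hxb
        have hine : i ≠ j0 := by
          rintro rfl
          exact (mem_sdiff.1 this).2 hx
        exact ⟨i, hine, hP, hpar⟩
      · rintro ⟨j, hjne, hP, hpar⟩
        have hxj : x ∈ X \ G j := mem_sdiff.2
          ⟨mem_biUnion.2 ⟨j0, mem_univ j0, hx⟩,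
           fun hxj => disjoint_left.1 (hdisj j j0 hjne) hxj hx⟩
        obtain ⟨b, ⟨hbP, hxb⟩, -⟩ := hpar.2 x hxj
        exact ⟨hP, b, hbP, hxb⟩
    have hdisjS : ∀ i ∈ Finset.univ.erase j0, ∀ j ∈ Finset.univ.erase j0, i ≠ j →
        Disjoint (classesMissing G R i) (classesMissing G R j) := by
      intro i _ j _ hij
      rw [disjoint_left]
      intro P hPi hPj
      exact hij (parallel_group_unique hdisj hpos (mem_classesMissing.1 hPi).2
        (mem_classesMissing.1 hPj).2)
    calc (B.filter (fun b => x ∈ b)).card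
        = ∑ P ∈ Rx, (P.filter (fun b => x ∈ b)).card := by rw [hBx, card_biUnion hdisjP]
      _ = ∑ P ∈ Rx, 1 := Finset.sum_congr rfl hone
      _ = Rx.card := by simp
      _ = ∑ j ∈ Finset.univ.erase j0, (classesMissing G R j).card := by
            rw [hRx, card_biUnion hdisjS]
  have stepC : ∀ j0 : Fin u,
      2 * (∑ j ∈ Finset.univ.erase j0, (classesMissing G R j).card) = (u - 1) * h := by
    intro j0
    obtain ⟨x, hx⟩ := hpos j0
    rw [← stepB j0 x hx]
    exact stepA j0 x hx
  have stepD : ∀ i j : Fin u, (classesMissing G R i).card = (classesMissing G R j).card := by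
    intro i j
    have hi := stepC i
    have hj := stepC j
    have hsi : (∑ k ∈ Finset.univ.erase i, (classesMissing G R k).card)
        + (classesMissing G R i).card = ∑ k ∈ Finset.univ, (classesMissing G R k).card :=
      Finset.sum_erase_add Finset.univ _ (mem_univ i)
    have hsj : (∑ k ∈ Finset.univ.erase j, (classesMissing G R k).card)
        + (classesMissing G R j).card = ∑ k ∈ Finset.univ, (classesMissing G R k).card :=
      Finset.sum_erase_add Finset.univ _ (mem_univ j)
    omega
  intro i
  have hsum : ∑ j ∈ Finset.univ.erase i, (classesMissing G R j).card
      = (u - 1) * (classesMissing G R i).card := by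
    rw [Finset.sum_congr rfl (fun j _ => stepD j i), Finset.sum_const, smul_eq_mul,
      card_erase_of_mem (mem_univ i), card_univ, Fintype.card_fin]
  have := stepC i
  rw [hsum] at this
  have hu1 : 0 < u - 1 := by omega
  have : (u - 1) * (2 * (classesMissing G R i).card) = (u - 1) * h := by
    ring_nf; ring_nf at this; omega
  exact Nat.eq_of_mul_eq_mul_left hu1 this

end Counting

section Transport

variable {f : ℕ → ℕ} {X : Finset ℕ}

lemma mem_image_iff_of_injOn (hf : Set.InjOn f ↑X) {s : Finset ℕ} (hs : s ⊆ X)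
    {a : ℕ} (ha : a ∈ X) : f a ∈ s.image f ↔ a ∈ s := by
  constructor
  · intro h
    obtain ⟨b, hb, hba⟩ := mem_image.1 h
    rwa [← hf (hs hb) ha hba]
  · exact fun h => mem_image_of_mem f h

lemma image_inj_of_injOn (hf : Set.InjOn f ↑X) {s t : Finset ℕ} (hs : s ⊆ X) (ht : t ⊆ X)
    (h : s.image f = t.image f) : s = t := by
  ext a
  constructor
  · intro ha
    have : f a ∈ t.image f := h ▸ mem_image_of_mem f ha
    exact (mem_image_iff_of_injOn hf ht (hs ha)).1 this
  · intro ha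
    have : f a ∈ s.image f := h ▸ mem_image_of_mem f ha
    exact (mem_image_iff_of_injOn hf hs (ht ha)).1 this

lemma image_disjoint_of_injOn (hf : Set.InjOn f ↑X) {s t : Finset ℕ} (hs : s ⊆ X) (ht : t ⊆ X)
    (h : Disjoint s t) : Disjoint (s.image f) (t.image f) := by
  rw [disjoint_left]
  intro a has hat
  obtain ⟨b, hb, rfl⟩ := mem_image.1 has
  have : b ∈ t := (mem_image_iff_of_injOn hf ht (hs hb)).1 hat
  exact disjoint_left.1 h hb this

lemma image_sdiff_of_injOn (hf : Set.InjOn f ↑X) {s t : Finset ℕ} (hs : s ⊆ X) (ht : t ⊆ X) :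
    (s \ t).image f = s.image f \ t.image f := by
  ext a
  simp only [mem_image, mem_sdiff]
  constructor
  · rintro ⟨b, ⟨hbs, hbt⟩, rfl⟩
    exact ⟨⟨b, hbs, rfl⟩,
      fun h => hbt ((mem_image_iff_of_injOn hf ht (hs hbs)).1 (mem_image.2 h))⟩
  · rintro ⟨⟨b, hbs, rfl⟩, hnt⟩
    exact ⟨b, ⟨hbs, fun h => hnt ⟨b, h, rfl⟩⟩, rfl⟩

lemma gdd_image {g u : ℕ} {G : Fin u → Finset ℕ} {B : Finset (Finset ℕ)}
    (hf : Set.InjOn f ↑(Finset.univ.biUnion G)) (hG : IsGDD g u G B) :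
    IsGDD g u (fun i => (G i).image f) (B.image (fun b => b.image f)) := by
  obtain ⟨hcard, hdisj, hblocks, hpairs⟩ := hG
  set X := Finset.univ.biUnion G with hXdef
  have hGX : ∀ i, G i ⊆ X := fun i => subset_biUnion_of_mem G (mem_univ i)
  have hXimg : Finset.univ.biUnion (fun i => (G i).image f) = X.image f := by
    rw [hXdef, biUnion_image]
  refine ⟨fun i => card_image_of_injOn (hf.mono (by exact_mod_cast hGX i)) ▸ (hcard i ▸ rfl),
    ?_, ?_, ?_⟩
  · intro i j hij
    exact image_disjoint_of_injOn hf (hGX i) (hGX j) (hdisj i j hij)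
  · intro b' hb'
    obtain ⟨b, hb, rfl⟩ := mem_image.1 hb'
    obtain ⟨hbX, hb3, hbg⟩ := hblocks b hb
    refine ⟨by rw [hXimg]; exact image_subset_image hbX, ?_, ?_⟩
    · rw [card_image_of_injOn (hf.mono (by exact_mod_cast hbX)), hb3]
    · intro i
      have : b.image f ∩ (G i).image f = (b ∩ G i).image f := by
        ext a
        simp only [mem_inter, mem_image]
        constructor
        · rintro ⟨⟨c, hc, rfl⟩, ⟨d, hd, hdc⟩⟩
          have : d = c := hf (hGX i hd) (hbX hc) hdc
          exact ⟨c, ⟨hc, this ▸ hd⟩, rfl⟩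
        · rintro ⟨c, ⟨h1, h2⟩, rfl⟩
          exact ⟨⟨c, h1, rfl⟩, ⟨c, h2, rfl⟩⟩
      rw [this]
      exact le_trans (card_image_le) (hbg i)
  · rintro x' y' ⟨i, j, hij, hx', hy'⟩
    obtain ⟨x, hx, rfl⟩ := mem_image.1 hx'
    obtain ⟨y, hy, rfl⟩ := mem_image.1 hy'
    obtain ⟨b, ⟨hb, hxb, hyb⟩, hub⟩ := hpairs x y ⟨i, j, hij, hx, hy⟩
    refine ⟨b.image f, ⟨mem_image_of_mem _ hb, mem_image_of_mem f hxb,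
      mem_image_of_mem f hyb⟩, ?_⟩
    rintro c' ⟨hc', hxc', hyc'⟩
    obtain ⟨c, hc, rfl⟩ := mem_image.1 hc'
    have hcX := (hblocks c hc).1
    have hxc : x ∈ c := (mem_image_iff_of_injOn hf hcX (hGX i hx)).1 hxc'
    have hyc : y ∈ c := (mem_image_iff_of_injOn hf hcX (hGX j hy)).1 hyc'
    rw [hub c ⟨hc, hxc, hyc⟩]

lemma parallel_image (hf : Set.InjOn f ↑X) {Y : Finset ℕ} {P : Finset (Finset ℕ)}
    (hY : Y ⊆ X) (hP : IsParallelClassOn Y P) :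
    IsParallelClassOn (Y.image f) (P.image (fun b => b.image f)) := by
  constructor
  · intro b' hb'
    obtain ⟨b, hb, rfl⟩ := mem_image.1 hb'
    exact image_subset_image (hP.1 b hb)
  · intro x' hx'
    obtain ⟨x, hx, rfl⟩ := mem_image.1 hx'
    obtain ⟨b, ⟨hb, hxb⟩, hub⟩ := hP.2 x hx
    refine ⟨b.image f, ⟨mem_image_of_mem _ hb, mem_image_of_mem f hxb⟩, ?_⟩
    rintro c' ⟨hc', hxc'⟩
    obtain ⟨c, hc, rfl⟩ := mem_image.1 hc'
    have hcX : c ⊆ X := (hP.1 c hc).trans hY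
    have hxc : x ∈ c := (mem_image_iff_of_injOn hf hcX (hY hx)).1 hxc'
    rw [hub c ⟨hc, hxc⟩]

lemma resolution_image {u : ℕ} {G : Fin u → Finset ℕ} {B : Finset (Finset ℕ)}
    {R : Finset (Finset (Finset ℕ))}
    (hf : Set.InjOn f ↑(Finset.univ.biUnion G))
    (hBX : ∀ b ∈ B, b ⊆ Finset.univ.biUnion G)
    (hR1 : ∀ P ∈ R, P ⊆ B ∧ ∃ i, IsParallelClassOn (Finset.univ.biUnion G \ G i) P)
    (hR2 : ∀ b ∈ B, ∃! P, P ∈ R ∧ b ∈ P) :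
    (∀ P ∈ R.image (fun P => P.image (fun b => b.image f)),
        P ⊆ B.image (fun b => b.image f) ∧
        ∃ i, IsParallelClassOn
          (Finset.univ.biUnion (fun i => (G i).image f) \ (G i).image f) P) ∧
    ∀ b ∈ B.image (fun b => b.image f),
      ∃! P, P ∈ R.image (fun P => P.image (fun b => b.image f)) ∧ b ∈ P := by
  set X := Finset.univ.biUnion G with hXdef
  have hGX : ∀ i, G i ⊆ X := fun i => subset_biUnion_of_mem G (mem_univ i)
  have hXimg : Finset.univ.biUnion (fun i => (G i).image f) = X.image f := by
    rw [hXdef, biUnion_image]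
  constructor
  · intro P' hP'
    obtain ⟨P, hP, rfl⟩ := mem_image.1 hP'
    obtain ⟨hPB, i, hpar⟩ := hR1 P hP
    refine ⟨image_subset_image hPB, i, ?_⟩
    have := parallel_image hf (sdiff_subset) hpar
    rw [image_sdiff_of_injOn hf (Subset.refl X) (hGX i)] at this
    rwa [hXimg]
  · intro b' hb'
    obtain ⟨b, hb, rfl⟩ := mem_image.1 hb'
    obtain ⟨P, ⟨hP, hbP⟩, huP⟩ := hR2 b hb
    refine ⟨P.image (fun b => b.image f), ⟨mem_image_of_mem _ hP, mem_image_of_mem _ hbP⟩, ?_⟩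
    rintro Q' ⟨hQ', hbQ'⟩
    obtain ⟨Q, hQ, rfl⟩ := mem_image.1 hQ'
    obtain ⟨c, hcQ, hcb⟩ := mem_image.1 hbQ'
    have hcB : c ∈ B := (hR1 Q hQ).1 hcQ
    have : c = b := image_inj_of_injOn hf (hBX c hcB) (hBX b hb) hcb
    subst this
    rw [huP Q ⟨hQ, hcQ⟩]

end Transport

section PieceMap

lemma exists_map_of_card {A T : Finset ℕ} (h : A.card = T.card) :
    ∃ f : ℕ → ℕ, Set.InjOn f ↑A ∧ A.image f = T := by
  classical
  let e := Finset.equivOfCardEq h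
  refine ⟨fun x => if hx : x ∈ A then (e ⟨x, hx⟩ : ℕ) else 0, ?_, ?_⟩
  · intro x hx y hy hxy
    simp only [Finset.mem_coe] at hx hy
    simp only [dif_pos hx, dif_pos hy] at hxy
    have : e ⟨x, hx⟩ = e ⟨y, hy⟩ := Subtype.coe_injective hxy
    exact congrArg Subtype.val (e.injective this)
  · apply Finset.Subset.antisymm
    · intro a ha
      obtain ⟨x, hx, rfl⟩ := mem_image.1 ha
      simp only [dif_pos hx]
      exact (e ⟨x, hx⟩).2
    · intro t ht
      refine mem_image.2 ⟨(e.symm ⟨t, ht⟩ : ℕ), (e.symm ⟨t, ht⟩).2, ?_⟩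
      simp only [dif_pos (e.symm ⟨t, ht⟩).2]
      rw [Subtype.coe_eta]
      exact congrArg Subtype.val (e.apply_symm_apply ⟨t, ht⟩)

lemma exists_pieceMap4 {A1 A2 A3 A4 T1 T2 T3 T4 : Finset ℕ}
    (hc1 : A1.card = T1.card) (hc2 : A2.card = T2.card)
    (hc3 : A3.card = T3.card) (hc4 : A4.card = T4.card)
    (hs12 : Disjoint A1 A2) (hs13 : Disjoint A1 A3) (hs14 : Disjoint A1 A4)
    (hs23 : Disjoint A2 A3) (hs24 : Disjoint A2 A4) (hs34 : Disjoint A3 A4)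
    (ht12 : Disjoint T1 T2) (ht13 : Disjoint T1 T3) (ht14 : Disjoint T1 T4)
    (ht23 : Disjoint T2 T3) (ht24 : Disjoint T2 T4) (ht34 : Disjoint T3 T4) :
    ∃ f : ℕ → ℕ, Set.InjOn f ↑(((A1 ∪ A2) ∪ A3) ∪ A4) ∧
      A1.image f = T1 ∧ A2.image f = T2 ∧ A3.image f = T3 ∧ A4.image f = T4 := by
  classical
  obtain ⟨f1, hi1, hf1⟩ := exists_map_of_card hc1
  obtain ⟨f2, hi2, hf2⟩ := exists_map_of_card hc2
  obtain ⟨f3, hi3, hf3⟩ := exists_map_of_card hc3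
  obtain ⟨f4, hi4, hf4⟩ := exists_map_of_card hc4
  set F : ℕ → ℕ :=
    fun x => if x ∈ A1 then f1 x else if x ∈ A2 then f2 x else if x ∈ A3 then f3 x else f4 x
    with hF
  have hv1 : ∀ x ∈ A1, F x = f1 x := by
    intro x hx; rw [hF]; simp only []; rw [if_pos hx]
  have hv2 : ∀ x ∈ A2, F x = f2 x := by
    intro x hx; rw [hF]; simp only []
    rw [if_neg (fun h => disjoint_left.1 hs12 h hx), if_pos hx]
  have hv3 : ∀ x ∈ A3, F x = f3 x := by
    intro x hx; rw [hF]; simp only []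
    rw [if_neg (fun h => disjoint_left.1 hs13 h hx),
      if_neg (fun h => disjoint_left.1 hs23 h hx), if_pos hx]
  have hv4 : ∀ x ∈ A4, F x = f4 x := by
    intro x hx; rw [hF]; simp only []
    rw [if_neg (fun h => disjoint_left.1 hs14 h hx),
      if_neg (fun h => disjoint_left.1 hs24 h hx),
      if_neg (fun h => disjoint_left.1 hs34 h hx)]
  have him1 : A1.image F = T1 := by
    rw [← hf1]; exact Finset.image_congr (fun x hx => hv1 x hx)
  have him2 : A2.image F = T2 := by
    rw [← hf2]; exact Finset.image_congr (fun x hx => hv2 x hx)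
  have him3 : A3.image F = T3 := by
    rw [← hf3]; exact Finset.image_congr (fun x hx => hv3 x hx)
  have him4 : A4.image F = T4 := by
    rw [← hf4]; exact Finset.image_congr (fun x hx => hv4 x hx)
  have e1 : ∀ z ∈ A1, F z ∈ T1 := fun z hz => him1 ▸ mem_image_of_mem F hz
  have e2 : ∀ z ∈ A2, F z ∈ T2 := fun z hz => him2 ▸ mem_image_of_mem F hz
  have e3 : ∀ z ∈ A3, F z ∈ T3 := fun z hz => him3 ▸ mem_image_of_mem F hz
  have e4 : ∀ z ∈ A4, F z ∈ T4 := fun z hz => him4 ▸ mem_image_of_mem F hz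
  refine ⟨F, ?_, him1, him2, him3, him4⟩
  intro x hx y hy hxy
  simp only [Finset.coe_union, Set.mem_union, Finset.mem_coe] at hx hy
  have hx' : x ∈ A1 ∨ x ∈ A2 ∨ x ∈ A3 ∨ x ∈ A4 := by tauto
  have hy' : y ∈ A1 ∨ y ∈ A2 ∨ y ∈ A3 ∨ y ∈ A4 := by tauto
  rcases hx' with h | h | h | h <;> rcases hy' with h' | h' | h' | h'
  · exact hi1 h h' (by rwa [hv1 x h, hv1 y h'] at hxy)
  · exact absurd (hxy ▸ e2 y h') (fun hc => disjoint_left.1 ht12 (e1 x h) hc)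
  · exact absurd (hxy ▸ e3 y h') (fun hc => disjoint_left.1 ht13 (e1 x h) hc)
  · exact absurd (hxy ▸ e4 y h') (fun hc => disjoint_left.1 ht14 (e1 x h) hc)
  · exact absurd (hxy ▸ e1 y h') (fun hc => disjoint_left.1 ht12 hc (e2 x h))
  · exact hi2 h h' (by rwa [hv2 x h, hv2 y h'] at hxy)
  · exact absurd (hxy ▸ e3 y h') (fun hc => disjoint_left.1 ht23 (e2 x h) hc)
  · exact absurd (hxy ▸ e4 y h') (fun hc => disjoint_left.1 ht24 (e2 x h) hc)
  · exact absurd (hxy ▸ e1 y h') (fun hc => disjoint_left.1 ht13 hc (e3 x h))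
  · exact absurd (hxy ▸ e2 y h') (fun hc => disjoint_left.1 ht23 hc (e3 x h))
  · exact hi3 h h' (by rwa [hv3 x h, hv3 y h'] at hxy)
  · exact absurd (hxy ▸ e4 y h') (fun hc => disjoint_left.1 ht34 (e3 x h) hc)
  · exact absurd (hxy ▸ e1 y h') (fun hc => disjoint_left.1 ht14 hc (e4 x h))
  · exact absurd (hxy ▸ e2 y h') (fun hc => disjoint_left.1 ht24 hc (e4 x h))
  · exact absurd (hxy ▸ e3 y h') (fun hc => disjoint_left.1 ht34 hc (e4 x h))
  · exact hi4 h h' (by rwa [hv4 x h, hv4 y h'] at hxy)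

end PieceMap

section glue

/-- first (outer) index encoded in `k` -/
def decI {m n : ℕ} (k : Fin (m * n + 1)) (hk : (k : ℕ) < m * n) : Fin n :=
  ⟨(k : ℕ) / m, Nat.div_lt_of_lt_mul hk⟩

/-- second (inner) index encoded in `k` -/
def decJ {m : ℕ} (hm : 0 < m) (k : ℕ) : Fin m :=
  ⟨k % m, Nat.mod_lt _ hm⟩

/-- index encoding -/
def encF (m n : ℕ) (i : Fin n) (j : Fin m) : Fin (m * n + 1) :=
  ⟨(j : ℕ) + m * (i : ℕ), by
    have hj := j.isLt
    have hi := i.isLt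
    have h1 : (j : ℕ) + m * (i : ℕ) < m * ((i : ℕ) + 1) := by
      rw [Nat.mul_add, Nat.mul_one]; omega
    have h2 : m * ((i : ℕ) + 1) ≤ m * n := Nat.mul_le_mul_left m hi
    omega⟩

lemma encF_lt {m n : ℕ} (i : Fin n) (j : Fin m) : ((encF m n i j : ℕ)) < m * n := by
  have hj := j.isLt
  have hi := i.isLt
  show (j : ℕ) + m * (i : ℕ) < m * n
  have h1 : (j : ℕ) + m * (i : ℕ) < m * ((i : ℕ) + 1) := by
    rw [Nat.mul_add, Nat.mul_one]; omega
  have h2 : m * ((i : ℕ) + 1) ≤ m * n := Nat.mul_le_mul_left m hi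
  omega

lemma decI_encF {m n : ℕ} (hm : 0 < m) (i : Fin n) (j : Fin m) :
    decI (encF m n i j) (encF_lt i j) = i := by
  apply Fin.ext
  show ((j : ℕ) + m * (i : ℕ)) / m = (i : ℕ)
  rw [Nat.add_mul_div_left _ _ hm, Nat.div_eq_of_lt j.isLt, Nat.zero_add]

lemma decJ_encF {m n : ℕ} (hm : 0 < m) (i : Fin n) (j : Fin m) :
    decJ hm ((encF m n i j : ℕ)) = j := by
  apply Fin.ext
  show ((j : ℕ) + m * (i : ℕ)) % m = (j : ℕ)
  rw [Nat.add_mul_mod_self_left, Nat.mod_eq_of_lt j.isLt]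

lemma encF_decIJ {m n : ℕ} (hm : 0 < m) (k : Fin (m * n + 1)) (hk : (k : ℕ) < m * n) :
    encF m n (decI k hk) (decJ hm (k : ℕ)) = k := by
  apply Fin.ext
  show (k : ℕ) % m + m * ((k : ℕ) / m) = (k : ℕ)
  rw [Nat.add_comm]
  exact Nat.div_add_mod _ _

/-- the glued group function -/
def glueG (m n : ℕ) (hm : 0 < m) (GG : Fin n → Fin (m + 1) → Finset ℕ) (S : Finset ℕ) :
    Fin (m * n + 1) → Finset ℕ := fun k =>
  if hk : (k : ℕ) < m * n then GG (decI k hk) ((decJ hm (k : ℕ)).castSucc) else S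

lemma glueG_of_lt {m n : ℕ} (hm : 0 < m) (GG : Fin n → Fin (m + 1) → Finset ℕ)
    (S : Finset ℕ) {k : Fin (m * n + 1)} (hk : (k : ℕ) < m * n) :
    glueG m n hm GG S k = GG (decI k hk) ((decJ hm (k : ℕ)).castSucc) := dif_pos hk

lemma glueG_of_last {m n : ℕ} (hm : 0 < m) (GG : Fin n → Fin (m + 1) → Finset ℕ)
    (S : Finset ℕ) {k : Fin (m * n + 1)} (hk : ¬ (k : ℕ) < m * n) :
    glueG m n hm GG S k = S := dif_neg hk

lemma glueG_encF {m n : ℕ} (hm : 0 < m) (GG : Fin n → Fin (m + 1) → Finset ℕ)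
    (S : Finset ℕ) (i : Fin n) (j : Fin m) :
    glueG m n hm GG S (encF m n i j) = GG i j.castSucc := by
  rw [glueG_of_lt hm GG S (encF_lt i j), decI_encF hm, decJ_encF hm]

/-- last index of the glued structure -/
def lastF (m n : ℕ) : Fin (m * n + 1) := ⟨m * n, Nat.lt_succ_self _⟩

lemma glueG_lastF {m n : ℕ} (hm : 0 < m) (GG : Fin n → Fin (m + 1) → Finset ℕ)
    (S : Finset ℕ) : glueG m n hm GG S (lastF m n) = S :=
  glueG_of_last hm GG S (by simp [lastF])

lemma glue_gdd {c a m n : ℕ} (hm : 0 < m) (hn : 0 < n)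
    {O : Fin n → Finset ℕ} {Bb : Finset (Finset ℕ)} (hout : IsGDD a n O Bb)
    {S : Finset ℕ}
    {GG : Fin n → Fin (m + 1) → Finset ℕ} {BI : Fin n → Finset (Finset ℕ)}
    (hin : ∀ i, IsGDD c (m + 1) (GG i) (BI i))
    (hlast : ∀ i, GG i (Fin.last m) = S)
    (hcover : ∀ i, Finset.univ.biUnion (fun j : Fin m => GG i j.castSucc) = O i)
    (hSO : ∀ i, Disjoint S (O i)) :
    IsGDD c (m * n + 1) (glueG m n hm GG S) (Bb ∪ Finset.univ.biUnion BI) := by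
  have hGGO : ∀ (i : Fin n) (j : Fin m), GG i j.castSucc ⊆ O i := fun i j => by
    rw [← hcover i]; exact subset_biUnion_of_mem (fun j : Fin m => GG i j.castSucc) (mem_univ j)
  have hXin : ∀ i, Finset.univ.biUnion (GG i) = S ∪ O i := fun i => by
    rw [biUnion_fin_succ (GG i), hlast i, hcover i]
  have hOdisj := hout.2.1
  have hBbX : ∀ b ∈ Bb, b ⊆ Finset.univ.biUnion O := fun b hb => (hout.2.2.1 b hb).1
  have hBIX : ∀ i, ∀ b ∈ BI i, b ⊆ S ∪ O i := fun i b hb => by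
    rw [← hXin i]; exact ((hin i).2.2.1 b hb).1
  have hSUO : Disjoint S (Finset.univ.biUnion O) := by
    rw [Finset.disjoint_biUnion_right]
    exact fun i _ => hSO i
  -- main point set identity
  have hXout : Finset.univ.biUnion (glueG m n hm GG S)
      = S ∪ Finset.univ.biUnion O := by
    apply Finset.Subset.antisymm
    · intro x hx
      obtain ⟨k, -, hxk⟩ := mem_biUnion.1 hx
      by_cases hk : (k : ℕ) < m * n
      · rw [glueG_of_lt hm GG S hk] at hxk
        exact mem_union_right _ (mem_biUnion.2 ⟨decI k hk, mem_univ _,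
          hGGO _ _ hxk⟩)
      · rw [glueG_of_last hm GG S hk] at hxk
        exact mem_union_left _ hxk
    · intro x hx
      rcases mem_union.1 hx with hxS | hxO
      · exact mem_biUnion.2 ⟨lastF m n, mem_univ _, by rwa [glueG_lastF]⟩
      · obtain ⟨i, -, hxi⟩ := mem_biUnion.1 hxO
        rw [← hcover i] at hxi
        obtain ⟨j, -, hxj⟩ := mem_biUnion.1 hxi
        exact mem_biUnion.2 ⟨encF m n i j, mem_univ _, by rwa [glueG_encF]⟩
  refine ⟨?_, ?_, ?_, ?_⟩
  -- cards
  · intro k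
    by_cases hk : (k : ℕ) < m * n
    · rw [glueG_of_lt hm GG S hk]
      exact (hin (decI k hk)).1 _
    · rw [glueG_of_last hm GG S hk, ← hlast ⟨0, hn⟩]
      exact (hin ⟨0, hn⟩).1 _
  -- group disjointness
  · intro k k' hkk'
    by_cases hk : (k : ℕ) < m * n <;> by_cases hk' : (k' : ℕ) < m * n
    · rw [glueG_of_lt hm GG S hk, glueG_of_lt hm GG S hk']
      rcases eq_or_ne (decI k hk) (decI k' hk') with hI | hI
      · have hJ : decJ hm (k : ℕ) ≠ decJ hm (k' : ℕ) := by
          intro hJ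
          apply hkk'
          rw [← encF_decIJ hm k hk, ← encF_decIJ hm k' hk', hI, hJ]
        rw [hI]
        exact (hin (decI k' hk')).2.1 _ _ (by
          simpa [Fin.castSucc_inj] using hJ)
      · exact Finset.disjoint_of_subset_left (hGGO _ _)
          (Finset.disjoint_of_subset_right (hGGO _ _) (hOdisj _ _ hI))
    · rw [glueG_of_lt hm GG S hk, glueG_of_last hm GG S hk']
      exact Finset.disjoint_of_subset_left (hGGO _ _) (hSO _).symm
    · rw [glueG_of_last hm GG S hk, glueG_of_lt hm GG S hk']
      exact Finset.disjoint_of_subset_right (hGGO _ _) (hSO _)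
    · exfalso
      apply hkk'
      apply Fin.ext
      have h1 := k.isLt
      have h2 := k'.isLt
      omega
  -- blocks
  · intro b hb
    rw [hXout]
    rcases mem_union.1 hb with hbB | hbI
    · obtain ⟨hbX, hb3, hbg⟩ := hout.2.2.1 b hbB
      refine ⟨hbX.trans subset_union_right, hb3, ?_⟩
      intro k
      by_cases hk : (k : ℕ) < m * n
      · rw [glueG_of_lt hm GG S hk]
        exact le_trans (card_le_card (inter_subset_inter (Finset.Subset.refl b) (hGGO _ _))) (hbg _)
      · rw [glueG_of_last hm GG S hk]
        have : b ∩ S = ∅ := by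
          rw [← Finset.disjoint_iff_inter_eq_empty]
          exact Finset.disjoint_of_subset_left hbX hSUO.symm
        simp [this]
    · obtain ⟨i, -, hbi⟩ := mem_biUnion.1 hbI
      obtain ⟨hbX, hb3, hbg⟩ := (hin i).2.2.1 b hbi
      refine ⟨?_, hb3, ?_⟩
      · rw [hXin i] at hbX
        intro x hx
        rcases mem_union.1 (hbX hx) with h | h
        · exact mem_union_left _ h
        · exact mem_union_right _ (mem_biUnion.2 ⟨i, mem_univ _, h⟩)
      · intro k
        by_cases hk : (k : ℕ) < m * n
        · rw [glueG_of_lt hm GG S hk]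
          rcases eq_or_ne (decI k hk) i with rfl | hne
          · exact hbg _
          · have : b ∩ GG (decI k hk) ((decJ hm (k : ℕ)).castSucc) = ∅ := by
              rw [← Finset.disjoint_iff_inter_eq_empty]
              apply Finset.disjoint_of_subset_left (hXin i ▸ hbX)
              apply Finset.disjoint_of_subset_right (hGGO _ _)
              rw [Finset.disjoint_union_left]
              exact ⟨hSO _, hOdisj i (decI k hk) (fun h => hne h.symm)⟩
            simp [this]
        · rw [glueG_of_last hm GG S hk, ← hlast i]
          exact hbg _
  -- pairs
  · -- helper : both points inside copy i, distinct groups of copy i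
    have hcase1 : ∀ (i : Fin n) (j j' : Fin (m + 1)) (x y : ℕ), j ≠ j' →
        x ∈ GG i j → y ∈ GG i j' →
        ∃! b, b ∈ Bb ∪ Finset.univ.biUnion BI ∧ x ∈ b ∧ y ∈ b := by
      intro i j j' x y hjj' hx hy
      apply exuniq_of_subset ((hin i).2.2.2 x y ⟨j, j', hjj', hx, hy⟩)
        ((subset_biUnion_of_mem BI (mem_univ i)).trans subset_union_right)
      intro b hb hxb hyb
      have hxO : x ∈ S ∪ O i := by
        rw [← hXin i]; exact mem_biUnion.2 ⟨j, mem_univ _, hx⟩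
      have hyO : y ∈ S ∪ O i := by
        rw [← hXin i]; exact mem_biUnion.2 ⟨j', mem_univ _, hy⟩
      have hxy : x ≠ y := by
        intro h
        subst h
        exact Finset.disjoint_left.1 ((hin i).2.1 j j' hjj') hx hy
      rcases mem_union.1 hb with hbB | hbI
      · exfalso
        -- a block of Bb contains at most one point of S ∪ O i ... need care:
        -- x and y both lie in S ∪ O i; blocks of Bb avoid S, so x, y ∈ O i,
        -- contradicting (b ∩ O i).card ≤ 1 ... but O i is not an outer group bound?
        -- O i IS outer group, bound from hout
        have hbX := hBbX b hbB
        have hxOi : x ∈ O i := by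
          rcases mem_union.1 hxO with h | h
          · exact absurd (hbX hxb) (fun hh => Finset.disjoint_left.1 hSUO h hh)
          · exact h
        have hyOi : y ∈ O i := by
          rcases mem_union.1 hyO with h | h
          · exact absurd (hbX hyb) (fun hh => Finset.disjoint_left.1 hSUO h hh)
          · exact h
        exact not_card_le_one (mem_inter.2 ⟨hxb, hxOi⟩) (mem_inter.2 ⟨hyb, hyOi⟩) hxy
          ((hout.2.2.1 b hbB).2.2 i)
      · obtain ⟨i', -, hbi'⟩ := mem_biUnion.1 hbI
        rcases eq_or_ne i' i with rfl | hne
        · exact hbi'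
        · exfalso
          -- b ⊆ S ∪ O i'; at least one of x,y lies in O i (not S)
          have hbX := hBIX i' b hbi'
          -- x,y are in different groups of copy i, so at most one is in S
          have hxynotS : x ∈ O i ∨ y ∈ O i := by
            rcases eq_or_ne j (Fin.last m) with rfl | hj
            · obtain ⟨j2, rfl⟩ := Fin.exists_castSucc_eq.2 hjj'.symm
              exact Or.inr (hGGO i j2 hy)
            · obtain ⟨j2, rfl⟩ := Fin.exists_castSucc_eq.2 hj
              exact Or.inl (hGGO i j2 hx)
          rcases hxynotS with h | h
          · rcases mem_union.1 (hbX hxb) with hh | hh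
            · exact Finset.disjoint_left.1 (hSO i) hh h
            · exact Finset.disjoint_left.1 (hOdisj i' i hne) hh h
          · rcases mem_union.1 (hbX hyb) with hh | hh
            · exact Finset.disjoint_left.1 (hSO i) hh h
            · exact Finset.disjoint_left.1 (hOdisj i' i hne) hh h
    -- helper : cross-copy pair
    have hcase2 : ∀ (i i' : Fin n) (x y : ℕ), i ≠ i' →
        x ∈ O i → y ∈ O i' →
        ∃! b, b ∈ Bb ∪ Finset.univ.biUnion BI ∧ x ∈ b ∧ y ∈ b := by
      intro i i' x y hne hx hy
      apply exuniq_of_subset (hout.2.2.2 x y ⟨i, i', hne, hx, hy⟩) subset_union_left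
      intro b hb hxb hyb
      rcases mem_union.1 hb with hbB | hbI
      · exact hbB
      · exfalso
        obtain ⟨i'', -, hbi''⟩ := mem_biUnion.1 hbI
        have hbX := hBIX i'' b hbi''
        have hxs : x ∉ S := fun h => Finset.disjoint_left.1 (hSO i) h hx
        have hys : y ∉ S := fun h => Finset.disjoint_left.1 (hSO i') h hy
        have hxi : i'' = i := by
          rcases mem_union.1 (hbX hxb) with h | h
          · exact absurd h hxs
          · by_contra hc
            exact Finset.disjoint_left.1 (hOdisj i'' i hc) h hx
        have hyi : i'' = i' := by
          rcases mem_union.1 (hbX hyb) with h | h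
          · exact absurd h hys
          · by_contra hc
            exact Finset.disjoint_left.1 (hOdisj i'' i' hc) h hy
        exact hne (hxi ▸ hyi)
    rintro x y ⟨k, k', hkk', hx, hy⟩
    by_cases hk : (k : ℕ) < m * n <;> by_cases hk' : (k' : ℕ) < m * n
    · rw [glueG_of_lt hm GG S hk] at hx
      rw [glueG_of_lt hm GG S hk'] at hy
      rcases eq_or_ne (decI k hk) (decI k' hk') with hI | hI
      · have hJ : decJ hm (k : ℕ) ≠ decJ hm (k' : ℕ) := by
          intro hJ
          apply hkk'
          rw [← encF_decIJ hm k hk, ← encF_decIJ hm k' hk', hI, hJ]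
        rw [hI] at hx
        exact hcase1 _ _ _ x y (by simpa [Fin.castSucc_inj] using hJ) hx hy
      · exact hcase2 _ _ x y hI (hGGO _ _ hx) (hGGO _ _ hy)
    · rw [glueG_of_lt hm GG S hk] at hx
      rw [glueG_of_last hm GG S hk', ← hlast (decI k hk)] at hy
      exact hcase1 _ _ _ x y (Fin.ne_of_lt (Fin.castSucc_lt_last _)) hx hy
    · rw [glueG_of_last hm GG S hk, ← hlast (decI k' hk')] at hx
      rw [glueG_of_lt hm GG S hk'] at hy
      exact exuniq_swap (hcase1 _ _ _ y x (Fin.ne_of_lt (Fin.castSucc_lt_last _)) hy hx)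
    · exfalso
      apply hkk'
      apply Fin.ext
      have h1 := k.isLt
      have h2 := k'.isLt
      omega


lemma glueG_biUnion {m n : ℕ} (hm : 0 < m) {GG : Fin n → Fin (m + 1) → Finset ℕ}
    (S : Finset ℕ) {O : Fin n → Finset ℕ}
    (hcover : ∀ i, Finset.univ.biUnion (fun j : Fin m => GG i j.castSucc) = O i) :
    Finset.univ.biUnion (glueG m n hm GG S) = S ∪ Finset.univ.biUnion O := by
  apply Finset.Subset.antisymm
  · intro x hx
    obtain ⟨k, -, hxk⟩ := mem_biUnion.1 hx
    by_cases hk : (k : ℕ) < m * n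
    · rw [glueG_of_lt hm GG S hk] at hxk
      refine mem_union_right _ (mem_biUnion.2 ⟨decI k hk, mem_univ _, ?_⟩)
      rw [← hcover (decI k hk)]
      exact mem_biUnion.2 ⟨decJ hm (k : ℕ), mem_univ _, hxk⟩
    · rw [glueG_of_last hm GG S hk] at hxk
      exact mem_union_left _ hxk
  · intro x hx
    rcases mem_union.1 hx with hxS | hxO
    · exact mem_biUnion.2 ⟨lastF m n, mem_univ _, by rwa [glueG_lastF]⟩
    · obtain ⟨i, -, hxi⟩ := mem_biUnion.1 hxO
      rw [← hcover i] at hxi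
      obtain ⟨j, -, hxj⟩ := mem_biUnion.1 hxi
      exact mem_biUnion.2 ⟨encF m n i j, mem_univ _, by rwa [glueG_encF]⟩

end glue


set_option maxHeartbeats 2000000 in
/-- If there exist a Kirkman frame of type (gm;2gm)^n and a Kirkman frame of type
(g;2g)^{m+1}, then there exists a Kirkman frame of type (g;2g)^{mn+1}. -/
theorem stmt4 (g m n : ℕ) (hg : 0 < g) (hm : 0 < m) (hn : 0 < n)
    (h1 : ExistsFrameSubGDD (g * m) (2 * (g * m)) n)
    (h2 : ExistsFrameSubGDD g (2 * g) (m + 1)) :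
    ExistsFrameSubGDD g (2 * g) (m * n + 1) := by
  classical
  rcases eq_or_ne n 1 with rfl | hn1
  · simpa using h2
  have hn2 : 2 ≤ n := by omega
  obtain ⟨H, K, Bb, Ab, ⟨hBgdd, Rb, hRb1, hRb2⟩, hKgdd, hKH, hABb⟩ := h1
  obtain ⟨G', W', B', A', ⟨hB'gdd, R', hR'1, hR'2⟩, hW'gdd, hWG', hA'B'⟩ := h2
  -- fresh points
  set N : ℕ := (Finset.univ.biUnion H).sup id + 1 with hNdef
  set S : Finset ℕ := (Finset.range (2 * g)).image (fun t => N + t) with hSdef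
  set T : Finset ℕ := (Finset.range g).image (fun t => N + t) with hTdef
  have haddinj : Function.Injective (fun t : ℕ => N + t) := fun a b h => by
    simpa using h
  have hScard : S.card = 2 * g := by
    rw [hSdef, card_image_of_injective _ haddinj, card_range]
  have hTcard : T.card = g := by
    rw [hTdef, card_image_of_injective _ haddinj, card_range]
  have hTS : T ⊆ S := by
    rw [hSdef, hTdef]
    exact image_subset_image (Finset.range_subset_range.2 (by omega))
  have hSXb : Disjoint S (Finset.univ.biUnion H) := by
    rw [disjoint_left]
    intro a haS haXb
    rw [hSdef] at haS
    obtain ⟨t, -, rfl⟩ := mem_image.1 haS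
    have h1 : id (N + t) ≤ (Finset.univ.biUnion H).sup id := Finset.le_sup haXb
    simp only [id_eq] at h1
    omega
  have hHXb : ∀ i, H i ⊆ Finset.univ.biUnion H := fun i => subset_biUnion_of_mem H (mem_univ i)
  have hSH : ∀ i, Disjoint S (H i) := fun i => disjoint_of_subset_right (hHXb i) hSXb
  have hTK : ∀ i, Disjoint T (K i) :=
    fun i => disjoint_of_subset_left hTS (disjoint_of_subset_right (hKH i) (hSH i))
  have hHpos : ∀ i, (H i).Nonempty := fun i => card_pos.1 (by
    rw [hBgdd.1 i]; positivity)
  -- pieces of the template point set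
  have hG'X' : ∀ j, G' j ⊆ Finset.univ.biUnion G' :=
    fun j => subset_biUnion_of_mem G' (mem_univ j)
  have hW'X' : ∀ j, W' j ⊆ Finset.univ.biUnion G' := fun j => (hWG' j).trans (hG'X' j)
  set P1 : Finset ℕ := W' (Fin.last m) with hP1def
  set P2 : Finset ℕ := G' (Fin.last m) \ W' (Fin.last m) with hP2def
  set P3 : Finset ℕ := Finset.univ.biUnion (fun j : Fin m => W' j.castSucc) with hP3def
  set P4 : Finset ℕ := Finset.univ.biUnion G' \ (G' (Fin.last m) ∪ P3) with hP4def
  have hP1card : P1.card = g := hW'gdd.1 _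
  have hP2card : P2.card = g := by
    rw [hP2def, card_sdiff_of_subset (hWG' _)]
    have e1 := hB'gdd.1 (Fin.last m)
    have e2 := hW'gdd.1 (Fin.last m)
    omega
  have hW'disj : ∀ a b : Fin m, a ≠ b → Disjoint (W' a.castSucc) (W' b.castSucc) :=
    fun a b hab => hW'gdd.2.1 _ _ (by simpa [Fin.castSucc_inj] using hab)
  have hP3card : P3.card = m * g := by
    rw [hP3def, card_biUnion (fun a _ b _ hab => hW'disj a b hab)]
    rw [Finset.sum_congr rfl (fun j _ => hW'gdd.1 j.castSucc), Finset.sum_const,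
      smul_eq_mul, card_univ, Fintype.card_fin]
  have hX'card : (Finset.univ.biUnion G').card = (m + 1) * (2 * g) := by
    rw [card_biUnion (fun a _ b _ hab => hB'gdd.2.1 a b hab)]
    rw [Finset.sum_congr rfl (fun j _ => hB'gdd.1 j), Finset.sum_const,
      smul_eq_mul, card_univ, Fintype.card_fin]
  have hP3G'last : Disjoint P3 (G' (Fin.last m)) := by
    rw [hP3def, disjoint_left]
    intro a h1 h2
    obtain ⟨j, -, hj⟩ := mem_biUnion.1 h1
    exact disjoint_left.1
      (hB'gdd.2.1 _ _ (Fin.ne_of_lt (Fin.castSucc_lt_last j))) (hWG' _ hj) h2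
  have hP3X' : P3 ⊆ Finset.univ.biUnion G' := by
    rw [hP3def]
    exact Finset.biUnion_subset.2 (fun j _ => hW'X' _)
  have hP4card : P4.card = g * m := by
    have hsub : G' (Fin.last m) ∪ P3 ⊆ Finset.univ.biUnion G' :=
      Finset.union_subset (hG'X' _) hP3X'
    rw [hP4def, card_sdiff_of_subset hsub, card_union_of_disjoint hP3G'last.symm, hX'card,
      hB'gdd.1, hP3card]
    have : (m + 1) * (2 * g) = (2 * g + m * g) + g * m := by ring
    omega
  -- source piece disjointness
  have hP12 : Disjoint P1 P2 := by
    rw [hP2def]; exact Finset.disjoint_sdiff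
  have hP13 : Disjoint P1 P3 := disjoint_of_subset_left (hWG' _) hP3G'last.symm
  have hP23 : Disjoint P2 P3 := by
    rw [hP2def]
    exact disjoint_of_subset_left sdiff_subset hP3G'last.symm
  have hP4d : Disjoint (G' (Fin.last m) ∪ P3) P4 := by
    rw [hP4def]; exact Finset.disjoint_sdiff
  have hP14 : Disjoint P1 P4 :=
    disjoint_of_subset_left ((hWG' _).trans subset_union_left) hP4d
  have hP24 : Disjoint P2 P4 := by
    rw [hP2def]
    exact disjoint_of_subset_left (sdiff_subset.trans subset_union_left) hP4d
  have hP34 : Disjoint P3 P4 := disjoint_of_subset_left subset_union_right hP4d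
  -- split of the template point set
  have hXsplit : Finset.univ.biUnion G' = ((P1 ∪ P2) ∪ P3) ∪ P4 := by
    apply Finset.Subset.antisymm
    · intro x hx
      by_cases h1 : x ∈ G' (Fin.last m)
      · by_cases h2 : x ∈ W' (Fin.last m)
        · exact mem_union_left _ (mem_union_left _ (mem_union_left _ (by rw [hP1def]; exact h2)))
        · refine mem_union_left _ (mem_union_left _ (mem_union_right _ ?_))
          rw [hP2def]; exact mem_sdiff.2 ⟨h1, h2⟩
      · by_cases h3 : x ∈ P3
        · exact mem_union_left _ (mem_union_right _ h3)
        · refine mem_union_right _ ?_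
          rw [hP4def]
          exact mem_sdiff.2 ⟨hx, fun hc => (mem_union.1 hc).elim h1 h3⟩
    · refine Finset.union_subset (Finset.union_subset (Finset.union_subset ?_ ?_) hP3X') ?_
      · rw [hP1def]; exact hW'X' _
      · rw [hP2def]; exact sdiff_subset.trans (hG'X' _)
      · rw [hP4def]; exact sdiff_subset
  -- build the relabeling maps
  have hexf : ∀ i : Fin n, ∃ fi : ℕ → ℕ, Set.InjOn fi ↑(Finset.univ.biUnion G') ∧
      P1.image fi = T ∧ P2.image fi = S \ T ∧ P3.image fi = K i ∧
      P4.image fi = H i \ K i := by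
    intro i
    have hST : (S \ T).card = g := by
      rw [card_sdiff_of_subset hTS, hScard, hTcard]; omega
    have hHK : (H i \ K i).card = g * m := by
      rw [card_sdiff_of_subset (hKH i), hBgdd.1, hKgdd.1]; omega
    have hTSsub : T ⊆ S := hTS
    have hKHi : K i ⊆ H i := hKH i
    have hSHi : Disjoint S (H i) := hSH i
    obtain ⟨fi, hinj, e1, e2, e3, e4⟩ := exists_pieceMap4
      (by rw [hP1card, hTcard]) (by rw [hP2card, hST])
      (by rw [hP3card, hKgdd.1]; ring) (by rw [hP4card, hHK])
      hP12 hP13 hP14 hP23 hP24 hP34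
      Finset.disjoint_sdiff
      (disjoint_of_subset_left hTSsub (disjoint_of_subset_right hKHi hSHi))
      (disjoint_of_subset_left hTSsub
        (disjoint_of_subset_right sdiff_subset hSHi))
      (disjoint_of_subset_left sdiff_subset (disjoint_of_subset_right hKHi hSHi))
      (disjoint_of_subset_left sdiff_subset
        (disjoint_of_subset_right sdiff_subset hSHi))
      Finset.disjoint_sdiff
    refine ⟨fi, ?_, e1, e2, e3, e4⟩
    rw [hXsplit]
    exact hinj
  choose f hfinj hfP1 hfP2 hfP3 hfP4 using hexf
  -- transported designs
  set Gi : Fin n → Fin (m + 1) → Finset ℕ := fun i j => (G' j).image (f i) with hGidef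
  set Wi : Fin n → Fin (m + 1) → Finset ℕ := fun i j => (W' j).image (f i) with hWidef
  set Bi : Fin n → Finset (Finset ℕ) := fun i => B'.image (fun b => b.image (f i)) with hBidef
  set Ai : Fin n → Finset (Finset ℕ) := fun i => A'.image (fun b => b.image (f i)) with hAidef
  set Ri : Fin n → Finset (Finset (Finset ℕ)) :=
    fun i => R'.image (fun P => P.image (fun b => b.image (f i))) with hRidef
  have hGigdd : ∀ i, IsGDD (2 * g) (m + 1) (Gi i) (Bi i) :=
    fun i => gdd_image (hfinj i) hB'gdd
  have hW'inj : ∀ i, Set.InjOn (f i) ↑(Finset.univ.biUnion W') := by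
    intro i
    apply (hfinj i).mono
    exact_mod_cast Finset.biUnion_subset.2 (fun j _ => hW'X' j)
  have hWigdd : ∀ i, IsGDD g (m + 1) (Wi i) (Ai i) :=
    fun i => gdd_image (hW'inj i) hW'gdd
  have hRitrans := fun i => resolution_image (hfinj i)
    (fun b hb => (hB'gdd.2.2.1 b hb).1) hR'1 hR'2
  have hRi1 : ∀ i, ∀ P ∈ Ri i, P ⊆ Bi i ∧
      ∃ j, IsParallelClassOn (Finset.univ.biUnion (Gi i) \ Gi i j) P :=
    fun i => (hRitrans i).1
  have hRi2 : ∀ i, ∀ b ∈ Bi i, ∃! P, P ∈ Ri i ∧ b ∈ P := fun i => (hRitrans i).2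
  -- images of the groups
  have hWilast : ∀ i, Wi i (Fin.last m) = T := fun i => hfP1 i
  have hGilast : ∀ i, Gi i (Fin.last m) = S := by
    intro i
    have hsplit : G' (Fin.last m) = P1 ∪ P2 := by
      rw [hP1def, hP2def, Finset.union_sdiff_of_subset (hWG' _)]
    show (G' (Fin.last m)).image (f i) = S
    rw [hsplit, image_union, hfP1, hfP2, Finset.union_sdiff_of_subset hTS]
  have hX'img : ∀ i, (Finset.univ.biUnion G').image (f i) = S ∪ H i := by
    intro i
    rw [hXsplit, image_union, image_union, image_union, hfP1 i, hfP2 i, hfP3 i, hfP4 i,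
      Finset.union_sdiff_of_subset hTS, union_assoc,
      Finset.union_sdiff_of_subset (hKH i)]
  have hGicover : ∀ i,
      Finset.univ.biUnion (fun j : Fin m => Gi i j.castSucc) = H i := by
    intro i
    apply Finset.Subset.antisymm
    · intro y hy
      obtain ⟨j, -, hyj⟩ := mem_biUnion.1 hy
      obtain ⟨x, hx, rfl⟩ := mem_image.1 hyj
      have hxX : x ∈ Finset.univ.biUnion G' := hG'X' _ hx
      have h1 : f i x ∈ S ∪ H i := by
        rw [← hX'img i]; exact mem_image_of_mem _ hxX
      rcases mem_union.1 h1 with hS' | hH'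
      · exfalso
        rw [← hGilast i] at hS'
        have hxlast : x ∈ G' (Fin.last m) :=
          (mem_image_iff_of_injOn (hfinj i) (hG'X' _) hxX).1 hS'
        exact disjoint_left.1
          (hB'gdd.2.1 _ _ (Fin.ne_of_lt (Fin.castSucc_lt_last j))) hx hxlast
      · exact hH'
    · intro y hy
      have h1 : y ∈ (Finset.univ.biUnion G').image (f i) := by
        rw [hX'img i]; exact mem_union_right _ hy
      obtain ⟨x, hxX, rfl⟩ := mem_image.1 h1
      obtain ⟨j0, -, hx0⟩ := mem_biUnion.1 hxX
      rcases eq_or_ne j0 (Fin.last m) with rfl | hne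
      · exfalso
        have : f i x ∈ S := by rw [← hGilast i]; exact mem_image_of_mem _ hx0
        exact disjoint_left.1 (hSH i) this hy
      · obtain ⟨j', rfl⟩ := Fin.exists_castSucc_eq.2 hne
        exact mem_biUnion.2 ⟨j', mem_univ _, mem_image_of_mem _ hx0⟩
  have hWicover : ∀ i,
      Finset.univ.biUnion (fun j : Fin m => Wi i j.castSucc) = K i := by
    intro i
    have h := hfP3 i
    rw [hP3def, Finset.biUnion_image] at h
    exact h
  have hXini : ∀ i, Finset.univ.biUnion (Gi i) = S ∪ H i := by
    intro i
    rw [biUnion_fin_succ (Gi i), hGilast i, hGicover i]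
  have hGiH : ∀ (i : Fin n) (j : Fin m), Gi i j.castSucc ⊆ H i := by
    intro i j
    rw [← hGicover i]
    exact subset_biUnion_of_mem (fun j : Fin m => Gi i j.castSucc) (mem_univ j)
  -- block location facts
  have hBi2 : ∀ i, ∀ b ∈ Bi i, 2 ≤ (b ∩ H i).card := by
    intro i b hb
    obtain ⟨hbX, hb3, hbg⟩ := (hGigdd i).2.2.1 b hb
    rw [hXini i] at hbX
    have hb' : (b ∩ S) ∪ (b ∩ H i) = b := by
      rw [← Finset.inter_union_distrib_left, Finset.inter_eq_left.2 hbX]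
    have h1 : (b ∩ S).card ≤ 1 := by rw [← hGilast i]; exact hbg _
    have h2 : b.card ≤ (b ∩ S).card + (b ∩ H i).card := by
      calc b.card = ((b ∩ S) ∪ (b ∩ H i)).card := by rw [hb']
        _ ≤ (b ∩ S).card + (b ∩ H i).card := card_union_le _ _
    omega
  have hBbBi : ∀ (i : Fin n) b, b ∈ Bb → b ∈ Bi i → False := by
    intro i b hbB hbI
    have h1 := hBi2 i b hbI
    have h2 := (hBgdd.2.2.1 b hbB).2.2 i
    omega
  have hBiBi : ∀ (i i' : Fin n), i ≠ i' → ∀ b, b ∈ Bi i → b ∈ Bi i' → False := by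
    intro i i' hne b hbI hbI'
    have h1 := hBi2 i b hbI
    have hbX := ((hGigdd i').2.2.1 b hbI').1
    rw [hXini i'] at hbX
    have : b ∩ H i = ∅ := by
      rw [← Finset.disjoint_iff_inter_eq_empty]
      apply Finset.disjoint_of_subset_left hbX
      rw [Finset.disjoint_union_left]
      exact ⟨hSH i, hBgdd.2.1 i' i (Ne.symm hne)⟩
    rw [this] at h1
    simp at h1
  have hRbsub : ∀ P ∈ Rb, P ⊆ Bb := fun P hP => (hRb1 P hP).1
  have hRisub : ∀ i, ∀ P ∈ Ri i, P ⊆ Bi i := fun i P hP => (hRi1 i P hP).1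
  -- class counting
  have hcntB : ∀ i, (classesMissing H Rb i).card = g * m := by
    intro i
    have h := frame_class_count (by positivity) hn2 hBgdd hRb1 hRb2 i
    omega
  have hGipos : ∀ i j, (Gi i j).Nonempty := by
    intro i j
    apply card_pos.1
    rw [(hGigdd i).1 j]
    positivity
  have hcntI : ∀ (i : Fin n) (j : Fin (m + 1)),
      (classesMissing (Gi i) (Ri i) j).card = g := by
    intro i j
    have h := frame_class_count (by positivity) (by omega) (hGigdd i) (hRi1 i) (hRi2 i) j
    omega
  have hbigmiss : ∀ P (i i' : Fin n), P ∈ classesMissing H Rb i →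
      P ∈ classesMissing H Rb i' → i = i' := by
    intro P i i' h h'
    exact parallel_group_unique hBgdd.2.1 hHpos (mem_classesMissing.1 h).2
      (mem_classesMissing.1 h').2
  have hsmmiss : ∀ (i : Fin n) P (j j' : Fin (m + 1)),
      P ∈ classesMissing (Gi i) (Ri i) j → P ∈ classesMissing (Gi i) (Ri i) j' →
      j = j' := by
    intro i P j j' h h'
    exact parallel_group_unique (hGigdd i).2.1 (hGipos i) (mem_classesMissing.1 h).2
      (mem_classesMissing.1 h').2
  -- the non-last classes
  set nonS : Fin n → Finset (Finset (Finset ℕ)) :=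
    fun i => (Finset.univ.erase (Fin.last m)).biUnion
      (fun j => classesMissing (Gi i) (Ri i) j) with hnonSdef
  have hnonSmem : ∀ (i : Fin n) P, P ∈ nonS i ↔
      ∃ j : Fin m, P ∈ classesMissing (Gi i) (Ri i) j.castSucc := by
    intro i P
    rw [hnonSdef]
    simp only [mem_biUnion, mem_erase, mem_univ, true_and, and_true]
    constructor
    · rintro ⟨j, hj, hPj⟩
      obtain ⟨j', rfl⟩ := Fin.exists_castSucc_eq.2 hj
      exact ⟨j', hPj⟩
    · rintro ⟨j', h⟩
      exact ⟨j'.castSucc, Fin.ne_of_lt (Fin.castSucc_lt_last j'), h⟩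
  have hnonSsub : ∀ (i : Fin n) P, P ∈ nonS i → P ∈ Ri i := by
    intro i P hP
    obtain ⟨j, hj⟩ := (hnonSmem i P).1 hP
    exact (mem_classesMissing.1 hj).1
  have hnonScard : ∀ i, (nonS i).card = m * g := by
    intro i
    rw [hnonSdef]
    rw [card_biUnion]
    · rw [Finset.sum_congr rfl (fun j _ => hcntI i j), Finset.sum_const, smul_eq_mul,
        card_erase_of_mem (mem_univ _), card_univ, Fintype.card_fin, Nat.add_sub_cancel]
    · intro a _ b _ hab
      rw [Function.onFun, disjoint_left]
      intro P hPa hPb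
      exact hab (hsmmiss i P a b hPa hPb)
  -- matchings
  obtain ⟨σ⟩ : Nonempty (∀ i : Fin n,
      {x // x ∈ nonS i} ≃ {x // x ∈ classesMissing H Rb i}) :=
    ⟨fun i => Finset.equivOfCardEq (by rw [hnonScard, hcntB]; ring)⟩
  obtain ⟨τ⟩ : Nonempty (∀ i : Fin n,
      {x // x ∈ Finset.range g} ≃ {x // x ∈ classesMissing (Gi i) (Ri i) (Fin.last m)}) :=
    ⟨fun i => Finset.equivOfCardEq (by rw [card_range, hcntI])⟩
  -- the resolution
  set RA : Finset (Finset (Finset ℕ)) := Finset.univ.biUnion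
    (fun i : Fin n => (nonS i).attach.image
      (fun P : {x // x ∈ nonS i} =>
        (↑P : Finset (Finset ℕ)) ∪ (↑(σ i P) : Finset (Finset ℕ)))) with hRAdef
  set RB : Finset (Finset (Finset ℕ)) := (Finset.range g).attach.image
    (fun t => Finset.univ.biUnion
      (fun i : Fin n => (↑(τ i t) : Finset (Finset ℕ)))) with hRBdef
  have hmemRA : ∀ Q, Q ∈ RA ↔ ∃ i, ∃ P : {x // x ∈ nonS i},
      Q = (↑P : Finset (Finset ℕ)) ∪ ↑(σ i P) := by
    intro Q
    rw [hRAdef]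
    constructor
    · intro h
      obtain ⟨i, -, hQi⟩ := mem_biUnion.1 h
      obtain ⟨P, -, hPQ⟩ := mem_image.1 hQi
      exact ⟨i, P, hPQ.symm⟩
    · rintro ⟨i, P, rfl⟩
      exact mem_biUnion.2 ⟨i, mem_univ _, mem_image.2 ⟨P, mem_attach _ _, rfl⟩⟩
  have hmemRB : ∀ Q, Q ∈ RB ↔ ∃ t : {x // x ∈ Finset.range g},
      Q = Finset.univ.biUnion (fun i : Fin n => (↑(τ i t) : Finset (Finset ℕ))) := by
    intro Q
    rw [hRBdef]
    constructor
    · intro h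
      obtain ⟨t, -, hPQ⟩ := mem_image.1 h
      exact ⟨t, hPQ.symm⟩
    · rintro ⟨t, rfl⟩
      exact mem_image.2 ⟨t, mem_attach _ _, rfl⟩
  have hSUH : Disjoint S (Finset.univ.biUnion H) := hSXb
  have hVout : Finset.univ.biUnion (glueG m n hm Gi S)
      = S ∪ Finset.univ.biUnion H := glueG_biUnion hm S hGicover
  -- resolution condition 1
  have cond1 : ∀ Q ∈ RA ∪ RB, Q ⊆ (Bb ∪ Finset.univ.biUnion Bi) ∧
      ∃ k, IsParallelClassOn
        (Finset.univ.biUnion (glueG m n hm Gi S) \ glueG m n hm Gi S k) Q := by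
    intro Q hQ
    rcases mem_union.1 hQ with hQA | hQB
    · obtain ⟨i, P, rfl⟩ := (hmemRA Q).1 hQA
      obtain ⟨j', hPj⟩ := (hnonSmem i ↑P).1 P.2
      have hPmem := mem_classesMissing.1 hPj
      have hσm := mem_classesMissing.1 (σ i P).2
      constructor
      · intro b hb
        rcases mem_union.1 hb with h | h
        · exact mem_union_right _ (mem_biUnion.2 ⟨i, mem_univ _,
            hRisub i _ hPmem.1 h⟩)
        · exact mem_union_left _ (hRbsub _ hσm.1 h)
      · refine ⟨encF m n i j', ?_⟩
        rw [hVout, glueG_encF]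
        have hp1 := hPmem.2
        rw [hXini i] at hp1
        have hp2 := hσm.2
        have hdisjXY : Disjoint ((S ∪ H i) \ Gi i j'.castSucc)
            (Finset.univ.biUnion H \ H i) := by
          rw [disjoint_left]
          intro x hx1 hx2
          obtain ⟨hx1', -⟩ := mem_sdiff.1 hx1
          obtain ⟨hx2', hx2''⟩ := mem_sdiff.1 hx2
          rcases mem_union.1 hx1' with h | h
          · exact disjoint_left.1 hSUH h hx2'
          · exact hx2'' h
        have := parallel_union hp1 hp2 hdisjXY
        rwa [setid1 (hGiH i j') (hHXb i) hSUH] at this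
    · obtain ⟨t, rfl⟩ := (hmemRB Q).1 hQB
      have hτm := fun i : Fin n => mem_classesMissing.1 (τ i t).2
      constructor
      · intro b hb
        obtain ⟨i, -, hbi⟩ := mem_biUnion.1 hb
        exact mem_union_right _ (mem_biUnion.2 ⟨i, mem_univ _,
          hRisub i _ (hτm i).1 hbi⟩)
      · refine ⟨lastF m n, ?_⟩
        rw [hVout, glueG_lastF, Finset.union_sdiff_cancel_left hSUH]
        apply parallel_biUnion hBgdd.2.1
        intro i
        have hp := (hτm i).2
        rw [hXini i, hGilast i, Finset.union_sdiff_cancel_left (hSH i)] at hp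
        exact hp
  -- resolution condition 2
  have cond2 : ∀ b ∈ Bb ∪ Finset.univ.biUnion Bi, ∃! Q, Q ∈ RA ∪ RB ∧ b ∈ Q := by
    intro b hb
    rcases mem_union.1 hb with hbB | hbI
    · obtain ⟨Pb, ⟨hPbR, hbPb⟩, huPb⟩ := hRb2 b hbB
      obtain ⟨i0, hpar0⟩ := (hRb1 Pb hPbR).2
      have hPbM : Pb ∈ classesMissing H Rb i0 := mem_classesMissing.2 ⟨hPbR, hpar0⟩
      set P0 : {x // x ∈ nonS i0} := (σ i0).symm ⟨Pb, hPbM⟩ with hP0def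
      have hσP0 : σ i0 P0 = ⟨Pb, hPbM⟩ := by
        rw [hP0def]; exact (σ i0).apply_symm_apply _
      refine ⟨(↑P0 : Finset (Finset ℕ)) ∪ ↑(σ i0 P0),
        ⟨mem_union_left _ ((hmemRA _).2 ⟨i0, P0, rfl⟩), ?_⟩, ?_⟩
      · rw [hσP0]; exact mem_union_right _ hbPb
      · rintro Q' ⟨hQ', hbQ'⟩
        rcases mem_union.1 hQ' with h | h
        · obtain ⟨i', P', rfl⟩ := (hmemRA Q').1 h
          rcases mem_union.1 hbQ' with hbl | hbr
          · exact absurd (hRisub i' _ (hnonSsub i' _ P'.2) hbl) (hBbBi i' b hbB)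
          · have hEq : (↑(σ i' P') : Finset (Finset ℕ)) = Pb :=
              huPb _ ⟨(mem_classesMissing.1 (σ i' P').2).1, hbr⟩
            have hi' : i' = i0 := by
              apply hbigmiss Pb i' i0 _ hPbM
              rw [← hEq]; exact (σ i' P').2
            subst hi'
            have hval : σ i' P' = ⟨Pb, hPbM⟩ := Subtype.ext hEq
            have hP' : P' = P0 := (σ i').injective (hval.trans hσP0.symm)
            rw [hP']
        · obtain ⟨t', rfl⟩ := (hmemRB Q').1 h
          exfalso
          obtain ⟨i', -, hbi'⟩ := mem_biUnion.1 hbQ'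
          exact hBbBi i' b hbB (hRisub i' _ (mem_classesMissing.1 (τ i' t').2).1 hbi')
    · obtain ⟨i, -, hbi⟩ := mem_biUnion.1 hbI
      obtain ⟨Pb, ⟨hPbR, hbPb⟩, huPb⟩ := hRi2 i b hbi
      obtain ⟨j0, hpar0⟩ := (hRi1 i Pb hPbR).2
      have hPbM : Pb ∈ classesMissing (Gi i) (Ri i) j0 := mem_classesMissing.2 ⟨hPbR, hpar0⟩
      have hloc : ∀ (i' : Fin n) Q, Q ∈ Ri i' → b ∈ Q → i' = i := by
        intro i' Q hQ hbQ
        by_contra hc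
        exact hBiBi i' i hc b (hRisub i' Q hQ hbQ) hbi
      rcases eq_or_ne j0 (Fin.last m) with rfl | hj0
      · -- type B class
        set t0 : {x // x ∈ Finset.range g} := (τ i).symm ⟨Pb, hPbM⟩ with ht0def
        have hτt0 : τ i t0 = ⟨Pb, hPbM⟩ := by
          rw [ht0def]; exact (τ i).apply_symm_apply _
        refine ⟨Finset.univ.biUnion (fun k : Fin n => (↑(τ k t0) : Finset (Finset ℕ))),
          ⟨mem_union_right _ ((hmemRB _).2 ⟨t0, rfl⟩), ?_⟩, ?_⟩
        · exact mem_biUnion.2 ⟨i, mem_univ _, by rw [hτt0]; exact hbPb⟩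
        · rintro Q' ⟨hQ', hbQ'⟩
          rcases mem_union.1 hQ' with h | h
          · obtain ⟨i', P', rfl⟩ := (hmemRA Q').1 h
            exfalso
            rcases mem_union.1 hbQ' with hbl | hbr
            · have hi' : i = i' := (hloc i' ↑P' (hnonSsub i' _ P'.2) hbl).symm
              subst hi'
              have hP'Pb : (↑P' : Finset (Finset ℕ)) = Pb :=
                huPb _ ⟨hnonSsub i _ P'.2, hbl⟩
              obtain ⟨j', hPj'⟩ := (hnonSmem i ↑P').1 P'.2
              rw [hP'Pb] at hPj'
              have : j'.castSucc = Fin.last m := hsmmiss i Pb _ _ hPj' hPbM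
              exact absurd this (Fin.ne_of_lt (Fin.castSucc_lt_last j'))
            · exact hBbBi i b (hRbsub _ (mem_classesMissing.1 (σ i' P').2).1 hbr) hbi
          · obtain ⟨t', rfl⟩ := (hmemRB Q').1 h
            obtain ⟨i'', -, hbi''⟩ := mem_biUnion.1 hbQ'
            have hi'' : i = i'' := (hloc i'' _ (mem_classesMissing.1 (τ i'' t').2).1 hbi'').symm
            subst hi''
            have hEq : (↑(τ i t') : Finset (Finset ℕ)) = Pb :=
              huPb _ ⟨(mem_classesMissing.1 (τ i t').2).1, hbi''⟩
            have ht' : t' = t0 := (τ i).injective ((Subtype.ext hEq).trans hτt0.symm)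
            rw [ht']
      · -- type A class
        obtain ⟨j', hj'c⟩ := Fin.exists_castSucc_eq.2 hj0
        have hPbnonS : Pb ∈ nonS i := (hnonSmem i Pb).2 ⟨j', by rw [hj'c]; exact hPbM⟩
        set P0 : {x // x ∈ nonS i} := ⟨Pb, hPbnonS⟩ with hP0def
        refine ⟨(↑P0 : Finset (Finset ℕ)) ∪ ↑(σ i P0),
          ⟨mem_union_left _ ((hmemRA _).2 ⟨i, P0, rfl⟩), mem_union_left _ hbPb⟩, ?_⟩
        rintro Q' ⟨hQ', hbQ'⟩
        rcases mem_union.1 hQ' with h | h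
        · obtain ⟨i', P', rfl⟩ := (hmemRA Q').1 h
          rcases mem_union.1 hbQ' with hbl | hbr
          · have hi' : i = i' := (hloc i' ↑P' (hnonSsub i' _ P'.2) hbl).symm
            subst hi'
            have hP'Pb : (↑P' : Finset (Finset ℕ)) = Pb :=
              huPb _ ⟨hnonSsub i _ P'.2, hbl⟩
            have : P' = P0 := Subtype.ext (by rw [hP'Pb, hP0def])
            rw [this]
          · exfalso
            exact hBbBi i b (hRbsub _ (mem_classesMissing.1 (σ i' P').2).1 hbr) hbi
        · obtain ⟨t', rfl⟩ := (hmemRB Q').1 h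
          exfalso
          obtain ⟨i'', -, hbi''⟩ := mem_biUnion.1 hbQ'
          have hi'' : i = i'' := (hloc i'' _ (mem_classesMissing.1 (τ i'' t').2).1 hbi'').symm
          subst hi''
          have hEq : (↑(τ i t') : Finset (Finset ℕ)) = Pb :=
            huPb _ ⟨(mem_classesMissing.1 (τ i t').2).1, hbi''⟩
          have hlast : Pb ∈ classesMissing (Gi i) (Ri i) (Fin.last m) := by
            rw [← hEq]; exact (τ i t').2
          exact hj0 (hsmmiss i Pb _ _ hPbM hlast)
  -- assemble everything
  refine ⟨glueG m n hm Gi S, glueG m n hm Wi T, Bb ∪ Finset.univ.biUnion Bi,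
    Ab ∪ Finset.univ.biUnion Ai, ⟨?_, RA ∪ RB, cond1, cond2⟩, ?_, ?_, ?_⟩
  · exact glue_gdd hm hn hBgdd hGigdd hGilast hGicover hSH
  · exact glue_gdd hm hn hKgdd hWigdd hWilast hWicover hTK
  · intro k
    by_cases hk : (k : ℕ) < m * n
    · rw [glueG_of_lt hm Wi T hk, glueG_of_lt hm Gi S hk]
      exact image_subset_image (hWG' _)
    · rw [glueG_of_last hm Wi T hk, glueG_of_last hm Gi S hk]
      exact hTS
  · intro b hb
    rcases mem_union.1 hb with h | h
    · exact mem_union_left _ (hABb h)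
    · obtain ⟨i, -, hbi⟩ := mem_biUnion.1 h
      obtain ⟨b0, hb0, rfl⟩ := mem_image.1 hbi
      exact mem_union_right _ (mem_biUnion.2 ⟨i, mem_univ _,
        mem_image.2 ⟨b0, hA'B' hb0, rfl⟩⟩)
end
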